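/- For any seminormal quasi-crystal Q of type Φ, the free ⊗̈-quasi-crystal monoid F^⊗̈(Q) is a ⊗̈-quasi-crystal monoid of type Φ: the given structure maps make Q* a seminormal quasi-crystal, and the map u ⊗̈ v ↦ uv induces a quasi-crystal homomorphism from F^⊗̈(Q) ⊗̈ F^⊗̈(Q) to F^⊗̈(Q). -/

import Mathlib

/-! ## Root system setting -/

/-- The data of a root system `Φ` in a Euclidean space `V`, together with a choice of
simple roots `(α_i)_{i ∈ ι}` and a weight lattice `Λ`, with the integer-valued coroot
pairing `pair λ i = ⟨λ, α_i^∨⟩ = 2⟪λ, α_i⟫/⟪α_i, α_i⟫` on the weight lattice. -/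
structure QCSetting (V : Type*) [NormedAddCommGroup V] [InnerProductSpace ℝ V]
    (ι : Type*) where
  Φ : Set V
  finite : Φ.Finite
  nonempty : Φ.Nonempty
  zero_not_mem : (0 : V) ∉ Φ
  reflect_mem : ∀ a ∈ Φ, ∀ b ∈ Φ, b - (2 * (inner ℝ b a : ℝ) / (inner ℝ a a : ℝ)) • a ∈ Φ
  smul_root : ∀ a ∈ Φ, ∀ k : ℝ, k • a ∈ Φ → k = 1 ∨ k = -1
  simple : ι → V
  simple_mem : ∀ i, simple i ∈ Φ
  simple_indep : LinearIndependent ℝ simple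
  Λ : AddSubgroup V
  lattice_spans : Submodule.span ℝ (Λ : Set V) = ⊤
  root_mem_lattice : ∀ a ∈ Φ, a ∈ Λ
  pair : Λ → ι → ℤ
  pair_spec : ∀ (v : Λ) (i : ι),
    (pair v i : ℝ) = 2 * (inner ℝ (v : V) (simple i) : ℝ) / (inner ℝ (simple i) (simple i) : ℝ)

variable {V : Type*} [NormedAddCommGroup V] [InnerProductSpace ℝ V] {ι : Type*}

/-! ## Quasi-crystals -/

/-- The structure maps of a quasi-crystal of type `S` on an underlying set `Q`:
a weight map `wt` with values in the weight lattice, partial quasi-Kashiwara operators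
`e i, f i : Q → Q ⊔ {⊥}` (realized as `Option`-valued maps, `none` playing the role
of `⊥`), and maps `ε i, φ i : Q → ℤ ∪ {+∞}` (realized as `WithTop ℤ`). -/
structure QC (S : QCSetting V ι) (Q : Type*) where
  wt : Q → S.Λ
  e : ι → Q → Option Q
  f : ι → Q → Option Q
  ε : ι → Q → WithTop ℤ
  φ : ι → Q → WithTop ℤ

/-- `k`-fold iteration of a partial map `g : Q → Option Q` starting at `x`. -/
def optIter {Q : Type*} (g : Q → Option Q) (k : ℕ) (x : Q) : Option Q :=
  (fun o => o.bind g)^[k] (some x)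

/-- The axioms of a seminormal quasi-crystal. -/
structure QC.IsSeminormal {S : QCSetting V ι} {Q : Type*} (𝒬 : QC S Q) : Prop where
  phi_eq : ∀ i x, 𝒬.φ i x = 𝒬.ε i x + ((S.pair (𝒬.wt x) i : ℤ) : WithTop ℤ)
  wt_e : ∀ i x y, 𝒬.e i x = some y → (𝒬.wt y : V) = (𝒬.wt x : V) + S.simple i
  wt_f : ∀ i x y, 𝒬.f i x = some y → (𝒬.wt y : V) = (𝒬.wt x : V) - S.simple i
  e_iff_f : ∀ i x y, 𝒬.e i x = some y ↔ 𝒬.f i y = some x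
  e_of_top : ∀ i x, 𝒬.ε i x = ⊤ → 𝒬.e i x = none
  f_of_top : ∀ i x, 𝒬.ε i x = ⊤ → 𝒬.f i x = none
  eps_spec : ∀ i x, 𝒬.ε i x ≠ ⊤ → ∃ n : ℕ, 𝒬.ε i x = ((n : ℤ) : WithTop ℤ) ∧
    IsGreatest {k : ℕ | (optIter (𝒬.e i) k x).isSome} n
  phi_spec : ∀ i x, 𝒬.ε i x ≠ ⊤ → ∃ n : ℕ, 𝒬.φ i x = ((n : ℤ) : WithTop ℤ) ∧
    IsGreatest {k : ℕ | (optIter (𝒬.f i) k x).isSome} n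

/-- A seminormal crystal is a seminormal quasi-crystal in which `ε i x ≠ +∞` always. -/
def QC.IsSeminormalCrystal {S : QCSetting V ι} {Q : Type*} (𝒬 : QC S Q) : Prop :=
  𝒬.IsSeminormal ∧ ∀ i x, 𝒬.ε i x ≠ ⊤

/-! ## Tensor product -/

/-- The tensor product of two quasi-crystals of the same type. -/
noncomputable def QC.tensor {S : QCSetting V ι} {Q Q' : Type*} (𝒬 : QC S Q) (𝒬' : QC S Q') :
    QC S (Q × Q') where
  wt p := 𝒬.wt p.1 + 𝒬'.wt p.2
  ε i p := max (𝒬.ε i p.1) (𝒬'.ε i p.2 + ((-(S.pair (𝒬.wt p.1) i) : ℤ) : WithTop ℤ))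
  φ i p := max (𝒬.φ i p.1 + ((S.pair (𝒬'.wt p.2) i : ℤ) : WithTop ℤ)) (𝒬'.φ i p.2)
  e i p := if 𝒬'.ε i p.2 ≤ 𝒬.φ i p.1
    then (𝒬.e i p.1).map (fun y => (y, p.2))
    else (𝒬'.e i p.2).map (fun y => (p.1, y))
  f i p := if 𝒬'.ε i p.2 < 𝒬.φ i p.1
    then (𝒬.f i p.1).map (fun y => (y, p.2))
    else (𝒬'.f i p.2).map (fun y => (p.1, y))

/-! ## Quasi-tensor product -/

/-- The (inverse-free) quasi-tensor product of two quasi-crystals of the same type. -/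
noncomputable def QC.qtensor {S : QCSetting V ι} {Q Q' : Type*} (𝒬 : QC S Q) (𝒬' : QC S Q') :
    QC S (Q × Q') where
  wt p := 𝒬.wt p.1 + 𝒬'.wt p.2
  ε i p := if 0 < 𝒬.φ i p.1 ∧ 0 < 𝒬'.ε i p.2 then ⊤
    else max (𝒬.ε i p.1) (𝒬'.ε i p.2 + ((-(S.pair (𝒬.wt p.1) i) : ℤ) : WithTop ℤ))
  φ i p := if 0 < 𝒬.φ i p.1 ∧ 0 < 𝒬'.ε i p.2 then ⊤
    else max (𝒬.φ i p.1 + ((S.pair (𝒬'.wt p.2) i : ℤ) : WithTop ℤ)) (𝒬'.φ i p.2)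
  e i p := if 0 < 𝒬.φ i p.1 ∧ 0 < 𝒬'.ε i p.2 then none
    else if 𝒬'.ε i p.2 ≤ 𝒬.φ i p.1 then (𝒬.e i p.1).map (fun y => (y, p.2))
    else (𝒬'.e i p.2).map (fun y => (p.1, y))
  f i p := if 0 < 𝒬.φ i p.1 ∧ 0 < 𝒬'.ε i p.2 then none
    else if 𝒬'.ε i p.2 < 𝒬.φ i p.1 then (𝒬.f i p.1).map (fun y => (y, p.2))
    else (𝒬'.f i p.2).map (fun y => (p.1, y))

/-! ## Homomorphisms -/

/-- A quasi-crystal homomorphism `ψ : 𝒬 → 𝒬'`, i.e. a map `Q ⊔ {⊥} → Q' ⊔ {⊥}`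
(realized on `Option`s, `none` playing the role of `⊥`) compatible with the structure
maps in the appropriate sense. -/
structure QCHom {S : QCSetting V ι} {Q Q' : Type*} (𝒬 : QC S Q) (𝒬' : QC S Q') where
  toFun : Option Q → Option Q'
  map_none : toFun none = none
  wt_eq : ∀ x y, toFun (some x) = some y → 𝒬'.wt y = 𝒬.wt x
  eps_eq : ∀ i x y, toFun (some x) = some y → 𝒬'.ε i y = 𝒬.ε i x
  phi_eq : ∀ i x y, toFun (some x) = some y → 𝒬'.φ i y = 𝒬.φ i x
  comm_e : ∀ i x x' y y', 𝒬.e i x = some x' → toFun (some x) = some y →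
    toFun (some x') = some y' → 𝒬'.e i y = some y'
  comm_f : ∀ i x x' y y', 𝒬.f i x = some x' → toFun (some x) = some y →
    toFun (some x') = some y' → 𝒬'.f i y = some y'

/-! ## The free `⊗`-quasi-crystal monoid -/

/-- Weight of a word: the sum of the weights of its letters. -/
def freeWt {S : QCSetting V ι} {Q : Type*} (𝒬 : QC S Q) : List Q → S.Λ
  | [] => 0
  | x :: w => 𝒬.wt x + freeWt 𝒬 w

/-- The map `ε̈_i` of the free `⊗`-quasi-crystal monoid. -/
def freeEps {S : QCSetting V ι} {Q : Type*} (𝒬 : QC S Q) (i : ι) : List Q → WithTop ℤ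
  | [] => 0
  | x :: w => max (𝒬.ε i x) (freeEps 𝒬 i w + ((-(S.pair (𝒬.wt x) i) : ℤ) : WithTop ℤ))

/-- The map `φ̈_i` of the free `⊗`-quasi-crystal monoid. -/
def freePhi {S : QCSetting V ι} {Q : Type*} (𝒬 : QC S Q) (i : ι) : List Q → WithTop ℤ
  | [] => 0
  | x :: w => max (𝒬.φ i x + ((S.pair (freeWt 𝒬 w) i : ℤ) : WithTop ℤ)) (freePhi 𝒬 i w)

/-- The operator `ë_i` of the free `⊗`-quasi-crystal monoid. -/
noncomputable def freeE {S : QCSetting V ι} {Q : Type*} (𝒬 : QC S Q) (i : ι) : List Q → Option (List Q)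
  | [] => none
  | x :: w => if freeEps 𝒬 i w ≤ 𝒬.φ i x
      then (𝒬.e i x).map (· :: w)
      else (freeE 𝒬 i w).map (x :: ·)

/-- The operator `f̈_i` of the free `⊗`-quasi-crystal monoid. -/
noncomputable def freeF {S : QCSetting V ι} {Q : Type*} (𝒬 : QC S Q) (i : ι) : List Q → Option (List Q)
  | [] => none
  | x :: w => if freeEps 𝒬 i w < 𝒬.φ i x
      then (𝒬.f i x).map (· :: w)
      else (freeF 𝒬 i w).map (x :: ·)

/-- The quasi-crystal structure of the free `⊗`-quasi-crystal monoid `F^⊗(𝒬)`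
on the free monoid `Q*`. -/
noncomputable def freeTensorQC {S : QCSetting V ι} {Q : Type*} (𝒬 : QC S Q) : QC S (FreeMonoid Q) where
  wt w := freeWt 𝒬 (FreeMonoid.toList w)
  ε i w := freeEps 𝒬 i (FreeMonoid.toList w)
  φ i w := freePhi 𝒬 i (FreeMonoid.toList w)
  e i w := (freeE 𝒬 i (FreeMonoid.toList w)).map (fun l => FreeMonoid.ofList l)
  f i w := (freeF 𝒬 i (FreeMonoid.toList w)).map (fun l => FreeMonoid.ofList l)

/-! ## The free `⊗̈`-quasi-crystal monoid -/

/-- The map `ε̈_i` of the free `⊗̈`-quasi-crystal monoid. -/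
noncomputable def qfreeEps {S : QCSetting V ι} {Q : Type*} (𝒬 : QC S Q) (i : ι) : List Q → WithTop ℤ
  | [] => 0
  | x :: w => if 0 < 𝒬.φ i x ∧ 0 < qfreeEps 𝒬 i w then ⊤
      else max (𝒬.ε i x) (qfreeEps 𝒬 i w + ((-(S.pair (𝒬.wt x) i) : ℤ) : WithTop ℤ))

/-- The map `φ̈_i` of the free `⊗̈`-quasi-crystal monoid. -/
noncomputable def qfreePhi {S : QCSetting V ι} {Q : Type*} (𝒬 : QC S Q) (i : ι) : List Q → WithTop ℤ
  | [] => 0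
  | x :: w => if 0 < 𝒬.φ i x ∧ 0 < qfreeEps 𝒬 i w then ⊤
      else max (𝒬.φ i x + ((S.pair (freeWt 𝒬 w) i : ℤ) : WithTop ℤ)) (qfreePhi 𝒬 i w)

/-- The operator `ë_i` of the free `⊗̈`-quasi-crystal monoid. -/
noncomputable def qfreeE {S : QCSetting V ι} {Q : Type*} (𝒬 : QC S Q) (i : ι) : List Q → Option (List Q)
  | [] => none
  | x :: w => if 0 < 𝒬.φ i x ∧ 0 < qfreeEps 𝒬 i w then none
      else if qfreeEps 𝒬 i w ≤ 𝒬.φ i x then (𝒬.e i x).map (· :: w)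
      else (qfreeE 𝒬 i w).map (x :: ·)

/-- The operator `f̈_i` of the free `⊗̈`-quasi-crystal monoid. -/
noncomputable def qfreeF {S : QCSetting V ι} {Q : Type*} (𝒬 : QC S Q) (i : ι) : List Q → Option (List Q)
  | [] => none
  | x :: w => if 0 < 𝒬.φ i x ∧ 0 < qfreeEps 𝒬 i w then none
      else if qfreeEps 𝒬 i w < 𝒬.φ i x then (𝒬.f i x).map (· :: w)
      else (qfreeF 𝒬 i w).map (x :: ·)

/-- The quasi-crystal structure of the free `⊗̈`-quasi-crystal monoid `F^⊗̈(𝒬)`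
on the free monoid `Q*`. -/
noncomputable def freeQTensorQC {S : QCSetting V ι} {Q : Type*} (𝒬 : QC S Q) : QC S (FreeMonoid Q) where
  wt w := freeWt 𝒬 (FreeMonoid.toList w)
  ε i w := qfreeEps 𝒬 i (FreeMonoid.toList w)
  φ i w := qfreePhi 𝒬 i (FreeMonoid.toList w)
  e i w := (qfreeE 𝒬 i (FreeMonoid.toList w)).map (fun l => FreeMonoid.ofList l)
  f i w := (qfreeF 𝒬 i (FreeMonoid.toList w)).map (fun l => FreeMonoid.ofList l)

/-! ## Connected components, plactic and hypoplactic congruences -/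

/-- Two elements are connected in the quasi-crystal graph if they are related by the
reflexive-symmetric-transitive closure of the edge relation given by the
quasi-Kashiwara operators. -/
def QC.conn {S : QCSetting V ι} {Q : Type*} (𝒬 : QC S Q) : Q → Q → Prop :=
  Relation.EqvGen (fun x y => ∃ i, 𝒬.f i x = some y ∨ 𝒬.f i y = some x ∨
    𝒬.e i x = some y ∨ 𝒬.e i y = some x)

/-- The connected component `𝒬(x)` of a quasi-crystal `𝒬` containing `x`, as a
quasi-crystal on the subtype of elements connected with `x`. -/
def QC.compQC {S : QCSetting V ι} {Q : Type*} (𝒬 : QC S Q) (x : Q) :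
    QC S {y : Q // 𝒬.conn x y} where
  wt y := 𝒬.wt y.1
  ε i y := 𝒬.ε i y.1
  φ i y := 𝒬.φ i y.1
  e i y := (𝒬.e i y.1).pmap (fun z hz => (⟨z, hz⟩ : {y : Q // 𝒬.conn x y}))
    (fun z hz => Relation.EqvGen.trans _ _ _ y.2
      (Relation.EqvGen.rel _ _ ⟨i, Or.inr (Or.inr (Or.inl hz))⟩))
  f i y := (𝒬.f i y.1).pmap (fun z hz => (⟨z, hz⟩ : {y : Q // 𝒬.conn x y}))
    (fun z hz => Relation.EqvGen.trans _ _ _ y.2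
      (Relation.EqvGen.rel _ _ ⟨i, Or.inl hz⟩))

/-- The plactic congruence: `u ≈ v` iff there is a quasi-crystal isomorphism between the
connected components of `u` and `v` in `F^⊗(𝒬)` mapping `u` to `v`. -/
def placticRel {S : QCSetting V ι} {Q : Type*} (𝒬 : QC S Q)
    (u v : FreeMonoid Q) : Prop :=
  ∃ ψ : QCHom ((freeTensorQC 𝒬).compQC u) ((freeTensorQC 𝒬).compQC v),
    Function.Bijective ψ.toFun ∧
    ψ.toFun (some ⟨u, Relation.EqvGen.refl u⟩) = some ⟨v, Relation.EqvGen.refl v⟩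

/-- The hypoplactic congruence: `u ∼̈ v` iff there is a quasi-crystal isomorphism between
the connected components of `u` and `v` in `F^⊗̈(𝒬)` mapping `u` to `v`. -/
def hypoRel {S : QCSetting V ι} {Q : Type*} (𝒬 : QC S Q)
    (u v : FreeMonoid Q) : Prop :=
  ∃ ψ : QCHom ((freeQTensorQC 𝒬).compQC u) ((freeQTensorQC 𝒬).compQC v),
    Function.Bijective ψ.toFun ∧
    ψ.toFun (some ⟨u, Relation.EqvGen.refl u⟩) = some ⟨v, Relation.EqvGen.refl v⟩

/-! ## Quasi-crystal monoids -/

/-- A monoid is equidivisible if whenever `x₁y₁ = x₂y₂` one of the factorizations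
refines the other. -/
def Equidivisible (M : Type*) [Monoid M] : Prop :=
  ∀ x₁ x₂ y₁ y₂ : M, x₁ * y₁ = x₂ * y₂ →
    ∃ z : M, (x₂ = x₁ * z ∧ y₁ = z * y₂) ∨ (x₁ = x₂ * z ∧ y₂ = z * y₁)

/-- A `⊗`-quasi-crystal monoid: a seminormal quasi-crystal structure on a monoid whose
structure maps interact with the multiplication by the tensor-product rules. -/
structure IsTensorQCMon {S : QCSetting V ι} {M : Type*} [Monoid M] (𝒬 : QC S M) : Prop where
  seminormal : 𝒬.IsSeminormal
  wt_mul : ∀ x y, 𝒬.wt (x * y) = 𝒬.wt x + 𝒬.wt y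
  eps_mul : ∀ i x y, 𝒬.ε i (x * y) =
    max (𝒬.ε i x) (𝒬.ε i y + ((-(S.pair (𝒬.wt x) i) : ℤ) : WithTop ℤ))
  phi_mul : ∀ i x y, 𝒬.φ i (x * y) =
    max (𝒬.φ i x + ((S.pair (𝒬.wt y) i : ℤ) : WithTop ℤ)) (𝒬.φ i y)
  e_mul : ∀ i x y, 𝒬.e i (x * y) =
    if 𝒬.ε i y ≤ 𝒬.φ i x then (𝒬.e i x).map (· * y) else (𝒬.e i y).map (x * ·)
  f_mul : ∀ i x y, 𝒬.f i (x * y) =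
    if 𝒬.ε i y < 𝒬.φ i x then (𝒬.f i x).map (· * y) else (𝒬.f i y).map (x * ·)

/-- A `⊗̈`-quasi-crystal monoid: a seminormal quasi-crystal structure on a monoid such
that `x ⊗̈ y ↦ x·y` induces a quasi-crystal homomorphism `M ⊗̈ M → M`. -/
def IsQTensorQCMon {S : QCSetting V ι} {M : Type*} [Monoid M] (𝒬 : QC S M) : Prop :=
  𝒬.IsSeminormal ∧
  ∃ ψ : QCHom (𝒬.qtensor 𝒬) 𝒬, ψ.toFun = Option.map (fun p => p.1 * p.2)

/-! ## The bicyclic monoid with zero `B₀` and the monoid `Z₀` -/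

/-- The bicyclic monoid `⟨−, + | (+)(−) = ε⟩`: elements are normal forms `(−)^a(+)^b`. -/
structure Bic where
  neg : ℕ
  pos : ℕ
deriving DecidableEq

instance : Mul Bic :=
  ⟨fun x y => ⟨x.neg + (y.neg - x.pos), y.pos + (x.pos - y.neg)⟩⟩

theorem Bic.mul_def (x y : Bic) :
    x * y = ⟨x.neg + (y.neg - x.pos), y.pos + (x.pos - y.neg)⟩ := rfl

instance : One Bic := ⟨⟨0, 0⟩⟩

theorem Bic.one_def : (1 : Bic) = ⟨0, 0⟩ := rfl

instance : Monoid Bic where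
  mul_assoc x y z := by
    simp only [Bic.mul_def, Bic.mk.injEq]
    omega
  one_mul x := by
    simp only [Bic.one_def, Bic.mul_def]
    cases x
    simp only [Bic.mk.injEq]
    omega
  mul_one x := by
    simp only [Bic.one_def, Bic.mul_def]
    cases x
    simp only [Bic.mk.injEq]
    omega

/-- The bicyclic monoid with a zero element adjoined,
`B₀ = ⟨0, −, + | (+)(−) = ε, 0x = x0 = 0⟩`. -/
abbrev B0 : Type := WithZero Bic

/-- The monoid `Z₀ = ⟨0, −, + | (+)(−) = 0, 0x = x0 = 0⟩`: the nonzero elements are the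
normal forms `(−)^a(+)^b`. -/
inductive Z0 : Type
  | zero : Z0
  | word : ℕ → ℕ → Z0
deriving DecidableEq

instance : Mul Z0 :=
  ⟨fun x y => match x, y with
    | Z0.zero, _ => Z0.zero
    | _, Z0.zero => Z0.zero
    | Z0.word a b, Z0.word c d =>
        if 0 < b ∧ 0 < c then Z0.zero else Z0.word (a + c) (b + d)⟩

instance : One Z0 := ⟨Z0.word 0 0⟩

instance : Zero Z0 := ⟨Z0.zero⟩

theorem Z0.one_def : (1 : Z0) = Z0.word 0 0 := rfl
theorem Z0.zero_def : (0 : Z0) = Z0.zero := rfl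
theorem Z0.zero_mul' (x : Z0) : Z0.zero * x = Z0.zero := by cases x <;> rfl
theorem Z0.mul_zero' (x : Z0) : x * Z0.zero = Z0.zero := by cases x <;> rfl
theorem Z0.word_mul_word (a b c d : ℕ) :
    Z0.word a b * Z0.word c d =
      if 0 < b ∧ 0 < c then Z0.zero else Z0.word (a + c) (b + d) := rfl

instance : MonoidWithZero Z0 where
  mul_assoc x y z := by
    cases x <;> cases y <;> cases z <;>
      simp only [Z0.zero_mul', Z0.mul_zero', Z0.word_mul_word]
    · split_ifs <;> simp_all [Z0.zero_mul', Z0.mul_zero', Z0.word_mul_word] <;>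
        split_ifs <;> simp_all <;> omega
  one_mul x := by
    cases x
    · rfl
    · simp [Z0.one_def, Z0.word_mul_word]
  mul_one x := by
    cases x
    · rfl
    · simp [Z0.one_def, Z0.word_mul_word]
  zero_mul x := by cases x <;> rfl
  mul_zero x := by cases x <;> rfl

/-! ## Signature maps -/

/-- The `i`-signature map for the tensor product `⊗`:
`sgn_i^⊗(w) = 0` if `ε̈_i(w) = +∞`, and `(−)^{ε̈_i(w)}(+)^{φ̈_i(w)}` otherwise. -/
noncomputable def tsgn {V : Type*} [NormedAddCommGroup V] [InnerProductSpace ℝ V] {ι : Type*}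
    {S : QCSetting V ι} {Q : Type*} (𝒬 : QC S Q) (i : ι) (w : FreeMonoid Q) : B0 :=
  if freeEps 𝒬 i (FreeMonoid.toList w) = ⊤ then 0
  else ↑(Bic.mk (WithTop.untopD 0 (freeEps 𝒬 i (FreeMonoid.toList w))).toNat
      (WithTop.untopD 0 (freePhi 𝒬 i (FreeMonoid.toList w))).toNat)

/-- The `i`-signature map for the quasi-tensor product `⊗̈`:
`sgn_i^⊗̈(w) = 0` if `ε̈_i(w) = +∞`, and `(−)^{ε̈_i(w)}(+)^{φ̈_i(w)}` otherwise. -/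
noncomputable def qsgn {V : Type*} [NormedAddCommGroup V] [InnerProductSpace ℝ V] {ι : Type*}
    {S : QCSetting V ι} {Q : Type*} (𝒬 : QC S Q) (i : ι) (w : FreeMonoid Q) : Z0 :=
  if qfreeEps 𝒬 i (FreeMonoid.toList w) = ⊤ then 0
  else Z0.word (WithTop.untopD 0 (qfreeEps 𝒬 i (FreeMonoid.toList w))).toNat
      (WithTop.untopD 0 (qfreePhi 𝒬 i (FreeMonoid.toList w))).toNat

/-! ## Auxiliary lemmas -/

section AuxLemmas

theorem optIter_one' {Q : Type*} (g : Q → Option Q) (x : Q) : optIter g 1 x = g x := rfl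

theorem optIter_succ'' {Q : Type*} (g : Q → Option Q) (k : ℕ) (x : Q) :
    optIter g (k + 1) x = (optIter g k x).bind g := by
  unfold optIter
  rw [Function.iterate_succ_apply']

theorem optIter_shift {Q : Type*} (g : Q → Option Q) {x y : Q} (hxy : g x = some y) (k : ℕ) :
    optIter g (k + 1) x = optIter g k y := by
  unfold optIter
  rw [Function.iterate_succ_apply]
  simp [hxy]

theorem optIter_mono {Q : Type*} (g : Q → Option Q) {x : Q} {j k : ℕ} (hj : j ≤ k)
    (hs : (optIter g k x).isSome) : (optIter g j x).isSome := by
  induction k with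
  | zero => simpa [Nat.le_zero.mp hj] using hs
  | succ k ih =>
    rcases Nat.eq_or_lt_of_le hj with hjk | hjk
    · exact hjk ▸ hs
    · apply ih (Nat.lt_succ_iff.mp hjk)
      rw [optIter_succ''] at hs
      cases ho : optIter g k x with
      | none => rw [ho] at hs; simp at hs
      | some a => simp

theorem optIter_conj {A B : Type*} (g : A → Option A) (f : A → B) (f' : B → A)
    (hf : ∀ a, f' (f a) = a) (hf2 : ∀ b, f (f' b) = b) (k : ℕ) (b : B) :
    optIter (fun y => (g (f' y)).map f) k b = (optIter g k (f' b)).map f := by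
  induction k generalizing b with
  | zero => simp [optIter, hf2]
  | succ k ih =>
    rw [optIter_succ'', optIter_succ'', ih]
    cases ho : optIter g k (f' b) with
    | none => simp
    | some a => simp [hf]


theorem coe_add_eq_top {a : WithTop ℤ} {p : ℤ} (ht : a + ((p : ℤ) : WithTop ℤ) = ⊤) : a = ⊤ := by
  rcases WithTop.add_eq_top.mp ht with h' | h'
  · exact h'
  · exact absurd h' (WithTop.coe_ne_top)

end AuxLemmas

section PairLemmas

variable {S : QCSetting V ι}

theorem QCSetting.inner_simple_ne (S : QCSetting V ι) (i : ι) :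
    (inner ℝ (S.simple i) (S.simple i) : ℝ) ≠ 0 := by
  intro hz
  rw [inner_self_eq_zero] at hz
  exact S.zero_not_mem (hz ▸ S.simple_mem i)

theorem QCSetting.pair_zero (S : QCSetting V ι) (i : ι) : S.pair 0 i = 0 := by
  have h := S.pair_spec 0 i
  simp only [ZeroMemClass.coe_zero, inner_zero_left, mul_zero, zero_div] at h
  exact_mod_cast h

theorem QCSetting.pair_add (S : QCSetting V ι) (a b : S.Λ) (i : ι) :
    S.pair (a + b) i = S.pair a i + S.pair b i := by
  have key : ((S.pair (a + b) i : ℤ) : ℝ) = ((S.pair a i + S.pair b i : ℤ) : ℝ) := by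
    push_cast
    rw [S.pair_spec, S.pair_spec, S.pair_spec]
    rw [AddSubgroup.coe_add, inner_add_left]
    ring
  exact_mod_cast key

theorem QCSetting.pair_shift (S : QCSetting V ι) {a b : S.Λ} (i : ι)
    (hab : (b : V) = (a : V) + S.simple i) : S.pair b i = S.pair a i + 2 := by
  have hne := S.inner_simple_ne i
  have key : ((S.pair b i : ℤ) : ℝ) = ((S.pair a i + 2 : ℤ) : ℝ) := by
    push_cast
    rw [S.pair_spec, S.pair_spec, hab, inner_add_left]
    field_simp
  exact_mod_cast key

end PairLemmas

section LetterLemmas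

variable {S : QCSetting V ι} {Q : Type*} {𝒬 : QC S Q}

theorem QC.IsSeminormal.eps_nonneg (h : 𝒬.IsSeminormal) (i : ι) (x : Q) : 0 ≤ 𝒬.ε i x := by
  by_cases ht : 𝒬.ε i x = ⊤
  · simp [ht]
  · obtain ⟨n, hn, -⟩ := h.eps_spec i x ht
    rw [hn]
    exact_mod_cast Int.natCast_nonneg n

theorem QC.IsSeminormal.phi_nonneg (h : 𝒬.IsSeminormal) (i : ι) (x : Q) : 0 ≤ 𝒬.φ i x := by
  by_cases ht : 𝒬.ε i x = ⊤
  · rw [h.phi_eq, ht]; simp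
  · obtain ⟨n, hn, -⟩ := h.phi_spec i x ht
    rw [hn]
    exact_mod_cast Int.natCast_nonneg n

theorem QC.IsSeminormal.e_isSome (h : 𝒬.IsSeminormal) {i : ι} {x : Q}
    (ht : 𝒬.ε i x ≠ ⊤) (hp : 0 < 𝒬.ε i x) : ∃ y, 𝒬.e i x = some y := by
  obtain ⟨n, hn, hg⟩ := h.eps_spec i x ht
  have hn1 : 1 ≤ n := by
    rw [hn] at hp
    have : (0:ℤ) < n := by exact_mod_cast hp
    omega
  have hs := optIter_mono (𝒬.e i) hn1 hg.1
  rw [optIter_one'] at hs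
  exact Option.isSome_iff_exists.mp hs

theorem QC.IsSeminormal.f_isSome (h : 𝒬.IsSeminormal) {i : ι} {x : Q}
    (ht : 𝒬.ε i x ≠ ⊤) (hp : 0 < 𝒬.φ i x) : ∃ y, 𝒬.f i x = some y := by
  obtain ⟨n, hn, hg⟩ := h.phi_spec i x ht
  have hn1 : 1 ≤ n := by
    rw [hn] at hp
    have : (0:ℤ) < n := by exact_mod_cast hp
    omega
  have hs := optIter_mono (𝒬.f i) hn1 hg.1
  rw [optIter_one'] at hs
  exact Option.isSome_iff_exists.mp hs

theorem QC.IsSeminormal.e_none_of_zero (h : 𝒬.IsSeminormal) {i : ι} {x : Q}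
    (hz : 𝒬.ε i x = 0) : 𝒬.e i x = none := by
  have ht : 𝒬.ε i x ≠ ⊤ := by simp [hz]
  obtain ⟨n, hn, hg⟩ := h.eps_spec i x ht
  have hn0 : n = 0 := by
    rw [hz] at hn
    have : (0:ℤ) = n := by exact_mod_cast hn
    omega
  by_contra he
  obtain ⟨y, hy⟩ := Option.ne_none_iff_exists'.mp he
  have h1 : 1 ∈ {k : ℕ | (optIter (𝒬.e i) k x).isSome} := by
    simp [Set.mem_setOf_eq, optIter_one', hy]
  have := hg.2 h1
  omega

theorem QC.IsSeminormal.f_none_of_zero (h : 𝒬.IsSeminormal) {i : ι} {x : Q}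
    (ht : 𝒬.ε i x ≠ ⊤) (hz : 𝒬.φ i x = 0) : 𝒬.f i x = none := by
  obtain ⟨n, hn, hg⟩ := h.phi_spec i x ht
  have hn0 : n = 0 := by
    rw [hz] at hn
    have : (0:ℤ) = n := by exact_mod_cast hn
    omega
  by_contra he
  obtain ⟨y, hy⟩ := Option.ne_none_iff_exists'.mp he
  have h1 : 1 ∈ {k : ℕ | (optIter (𝒬.f i) k x).isSome} := by
    simp [Set.mem_setOf_eq, optIter_one', hy]
  have := hg.2 h1
  omega

theorem QC.IsSeminormal.e_facts (h : 𝒬.IsSeminormal) {i : ι} {x y : Q}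
    (hxy : 𝒬.e i x = some y) :
    𝒬.ε i x ≠ ⊤ ∧ 𝒬.ε i y ≠ ⊤ ∧ 𝒬.ε i y + 1 = 𝒬.ε i x ∧ 𝒬.φ i y = 𝒬.φ i x + 1 ∧
    𝒬.f i y = some x ∧ (𝒬.wt y : V) = (𝒬.wt x : V) + S.simple i ∧
    S.pair (𝒬.wt y) i = S.pair (𝒬.wt x) i + 2 := by
  have htx : 𝒬.ε i x ≠ ⊤ := fun ht => by simp [h.e_of_top i x ht] at hxy
  have hfy : 𝒬.f i y = some x := (h.e_iff_f i x y).mp hxy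
  have hty : 𝒬.ε i y ≠ ⊤ := fun ht => by simp [h.f_of_top i y ht] at hfy
  have hwt : (𝒬.wt y : V) = (𝒬.wt x : V) + S.simple i := h.wt_e i x y hxy
  have hpair : S.pair (𝒬.wt y) i = S.pair (𝒬.wt x) i + 2 := S.pair_shift i hwt
  obtain ⟨n, hn, hgn⟩ := h.eps_spec i x htx
  obtain ⟨m, hm, hgm⟩ := h.eps_spec i y hty
  have hshift : ∀ k, optIter (𝒬.e i) (k + 1) x = optIter (𝒬.e i) k y :=
    fun k => optIter_shift _ hxy k
  have h1n : 1 ≤ n := by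
    have h1 : 1 ∈ {k : ℕ | (optIter (𝒬.e i) k x).isSome} := by
      simp [Set.mem_setOf_eq, optIter_one', hxy]
    exact hgn.2 h1
  have hmn : m + 1 = n := by
    have hg' : IsGreatest {k : ℕ | (optIter (𝒬.e i) k y).isSome} (n - 1) := by
      constructor
      · show (optIter (𝒬.e i) (n - 1) y).isSome
        rw [← hshift]
        have hrw : n - 1 + 1 = n := by omega
        rw [hrw]
        exact hgn.1
      · intro k hk
        have hk1 : (optIter (𝒬.e i) (k + 1) x).isSome := by rw [hshift]; exact hk
        have := hgn.2 hk1
        omega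
    have := hgm.unique hg'
    omega
  have heps : 𝒬.ε i y + 1 = 𝒬.ε i x := by
    rw [hn, hm]
    have : (m : ℤ) + 1 = (n : ℤ) := by omega
    exact_mod_cast this
  have hphi : 𝒬.φ i y = 𝒬.φ i x + 1 := by
    rw [h.phi_eq i y, h.phi_eq i x, hn, hm, hpair]
    have : (m : ℤ) + (S.pair (𝒬.wt x) i + 2) = (n : ℤ) + S.pair (𝒬.wt x) i + 1 := by omega
    exact_mod_cast this
  exact ⟨htx, hty, heps, hphi, hfy, hwt, hpair⟩

theorem QC.IsSeminormal.f_facts (h : 𝒬.IsSeminormal) {i : ι} {x y : Q}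
    (hxy : 𝒬.f i x = some y) :
    𝒬.ε i x ≠ ⊤ ∧ 𝒬.ε i y ≠ ⊤ ∧ 𝒬.ε i x + 1 = 𝒬.ε i y ∧ 𝒬.φ i x = 𝒬.φ i y + 1 ∧
    𝒬.e i y = some x ∧ (𝒬.wt x : V) = (𝒬.wt y : V) + S.simple i ∧
    S.pair (𝒬.wt x) i = S.pair (𝒬.wt y) i + 2 := by
  have hey : 𝒬.e i y = some x := (h.e_iff_f i y x).mpr hxy
  obtain ⟨h1, h2, h3, h4, h5, h6, h7⟩ := h.e_facts hey
  exact ⟨h2, h1, h3, h4, hey, h6, h7⟩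

end LetterLemmas

section WordLemmas

variable {S : QCSetting V ι} {Q : Type*} {𝒬 : QC S Q}

theorem max_shift' (a b : WithTop ℤ) (p q : ℤ) :
    max (a + ((p : ℤ) : WithTop ℤ) + ((q : ℤ) : WithTop ℤ)) (b + ((q : ℤ) : WithTop ℤ))
      = max a (b + ((-p : ℤ) : WithTop ℤ)) + (((p + q) : ℤ) : WithTop ℤ) := by
  induction a using WithTop.recTopCoe with
  | top => simp
  | coe a =>
    induction b using WithTop.recTopCoe with
    | top => simp
    | coe b => norm_cast; omega

theorem freeWt_append (𝒬 : QC S Q) (l₁ l₂ : List Q) :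
    freeWt 𝒬 (l₁ ++ l₂) = freeWt 𝒬 l₁ + freeWt 𝒬 l₂ := by
  induction l₁ with
  | nil => simp [freeWt]
  | cons x t ih => simp [freeWt, ih, add_assoc]

theorem qfreeEps_nonneg (h : 𝒬.IsSeminormal) (i : ι) :
    ∀ l : List Q, 0 ≤ qfreeEps 𝒬 i l
  | [] => le_refl 0
  | x :: l => by
    rw [qfreeEps]
    split
    · exact le_top
    · exact le_trans (h.eps_nonneg i x) (le_max_left _ _)

theorem qfreePhi_nonneg (h : 𝒬.IsSeminormal) (i : ι) :
    ∀ l : List Q, 0 ≤ qfreePhi 𝒬 i l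
  | [] => le_refl 0
  | x :: l => by
    rw [qfreePhi]
    split
    · exact le_top
    · exact le_trans (qfreePhi_nonneg h i l) (le_max_right _ _)

theorem qfreePhi_eq (h : 𝒬.IsSeminormal) (i : ι) :
    ∀ l : List Q, qfreePhi 𝒬 i l
      = qfreeEps 𝒬 i l + ((S.pair (freeWt 𝒬 l) i : ℤ) : WithTop ℤ)
  | [] => by
    simp [qfreePhi, qfreeEps, freeWt, QCSetting.pair_zero]
  | x :: l => by
    rw [qfreePhi, qfreeEps]
    have hp : S.pair (freeWt 𝒬 (x :: l)) i
        = S.pair (𝒬.wt x) i + S.pair (freeWt 𝒬 l) i := by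
      rw [freeWt, QCSetting.pair_add]
    rw [hp]
    split
    · simp
    · rw [h.phi_eq i x, qfreePhi_eq h i l]
      exact max_shift' _ _ _ _

theorem qfreeEps_cons_ne_top {i : ι} {x : Q} {l : List Q}
    (H : qfreeEps 𝒬 i (x :: l) ≠ ⊤) :
    ¬(0 < 𝒬.φ i x ∧ 0 < qfreeEps 𝒬 i l) ∧ 𝒬.ε i x ≠ ⊤ ∧ qfreeEps 𝒬 i l ≠ ⊤ := by
  rw [qfreeEps] at H
  split at H
  · exact absurd rfl H
  · refine ⟨by assumption, fun h1 => H ?_, fun h2 => H ?_⟩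
    · rw [h1]; simp
    · rw [h2]; simp

theorem qfreeE_none_of_top (h : 𝒬.IsSeminormal) (i : ι) :
    ∀ l : List Q, qfreeEps 𝒬 i l = ⊤ → qfreeE 𝒬 i l = none
  | [] => by intro H; simp [qfreeEps] at H
  | x :: l => by
    intro H
    rw [qfreeEps] at H
    rw [qfreeE]
    split at H
    · rw [if_pos (by assumption)]
    · rw [if_neg (by assumption)]
      rcases max_eq_top.mp H with hx | hl
      · rw [if_pos]
        · rw [h.e_of_top i x hx]; rfl
        · calc qfreeEps 𝒬 i l ≤ ⊤ := le_top
            _ = 𝒬.φ i x := by rw [h.phi_eq i x, hx]; simp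
      · have hl' : qfreeEps 𝒬 i l = ⊤ := coe_add_eq_top hl
        by_cases hle : qfreeEps 𝒬 i l ≤ 𝒬.φ i x
        · rw [if_pos hle]
          have hpt : 𝒬.φ i x = ⊤ := top_le_iff.mp (hl' ▸ hle)
          have hex : 𝒬.ε i x = ⊤ := by
            rw [h.phi_eq i x] at hpt
            exact coe_add_eq_top hpt
          rw [h.e_of_top i x hex]; rfl
        · rw [if_neg hle, qfreeE_none_of_top h i l hl']; rfl

theorem qfreeF_none_of_top (h : 𝒬.IsSeminormal) (i : ι) :
    ∀ l : List Q, qfreeEps 𝒬 i l = ⊤ → qfreeF 𝒬 i l = none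
  | [] => by intro H; simp [qfreeEps] at H
  | x :: l => by
    intro H
    rw [qfreeEps] at H
    rw [qfreeF]
    split at H
    · rw [if_pos (by assumption)]
    · rw [if_neg (by assumption)]
      rcases max_eq_top.mp H with hx | hl
      · have hfx : 𝒬.f i x = none := h.f_of_top i x hx
        have hphix : 𝒬.φ i x = ⊤ := by rw [h.phi_eq i x, hx]; simp
        by_cases hlt : qfreeEps 𝒬 i l < 𝒬.φ i x
        · rw [if_pos hlt, hfx]; rfl
        · rw [if_neg hlt]
          have hl' : qfreeEps 𝒬 i l = ⊤ := by
            by_contra hc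
            exact hlt (hphix ▸ (Ne.lt_top hc))
          rw [qfreeF_none_of_top h i l hl']; rfl
      · have hl' : qfreeEps 𝒬 i l = ⊤ := coe_add_eq_top hl
        have hlt : ¬ qfreeEps 𝒬 i l < 𝒬.φ i x := by
          rw [hl']
          exact not_top_lt
        rw [if_neg hlt, qfreeF_none_of_top h i l hl']; rfl

end WordLemmas

section FactsLemmas

variable {S : QCSetting V ι} {Q : Type*} {𝒬 : QC S Q}

theorem qfreeE_facts (h : 𝒬.IsSeminormal) {i : ι} :
    ∀ {l l' : List Q}, qfreeE 𝒬 i l = some l' →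
      qfreeEps 𝒬 i l ≠ ⊤ ∧ qfreeEps 𝒬 i l' + 1 = qfreeEps 𝒬 i l ∧
      (freeWt 𝒬 l' : V) = (freeWt 𝒬 l : V) + S.simple i ∧ qfreeF 𝒬 i l' = some l
  | [], l' => by intro H; simp [qfreeE] at H
  | x :: l, l' => by
    intro H
    rw [qfreeE] at H
    split at H
    case isTrue => simp at H
    case isFalse hcond =>
    split at H
    case isTrue hle =>
      -- e acts on the first letter
      obtain ⟨y, he, rfl⟩ : ∃ y, 𝒬.e i x = some y ∧ y :: l = l' := by
        cases hxe : 𝒬.e i x with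
        | none => rw [hxe] at H; simp at H
        | some y => rw [hxe] at H; exact ⟨y, rfl, by simpa using H⟩
      obtain ⟨hax, hay, hepsy, hphiy, hfy, hwty, hpairy⟩ := h.e_facts he
      obtain ⟨a, ha⟩ := WithTop.ne_top_iff_exists.mp hax
      have ha : 𝒬.ε i x = ((a : ℤ) : WithTop ℤ) := ha.symm
      set px := S.pair (𝒬.wt x) i with hpx
      have hφ : 𝒬.φ i x = ((a + px : ℤ) : WithTop ℤ) := by
        rw [h.phi_eq i x, ha]; norm_cast
      have hlne : qfreeEps 𝒬 i l ≠ ⊤ := fun ht => by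
        rw [ht, hφ] at hle; exact WithTop.not_top_le_coe _ hle
      obtain ⟨c, hc⟩ := WithTop.ne_top_iff_exists.mp hlne
      have hc : qfreeEps 𝒬 i l = ((c : ℤ) : WithTop ℤ) := hc.symm
      have hc0 : 0 ≤ c := by
        have := qfreeEps_nonneg h i l; rw [hc] at this; exact_mod_cast this
      have hca : c ≤ a + px := by
        rw [hc, hφ] at hle; exact_mod_cast hle
      have hcnp : c ≤ 0 := by
        by_contra hcp
        exact hcond ⟨by rw [hφ]; exact_mod_cast (by omega : (0:ℤ) < a + px),
          by rw [hc]; exact_mod_cast (by omega : (0:ℤ) < c)⟩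
      obtain ⟨b, hb⟩ := WithTop.ne_top_iff_exists.mp hay
      have hb : 𝒬.ε i y = ((b : ℤ) : WithTop ℤ) := hb.symm
      have hba : b + 1 = a := by
        rw [hb, ha] at hepsy; exact_mod_cast hepsy
      have hφy : 𝒬.φ i y = ((a + px + 1 : ℤ) : WithTop ℤ) := by
        rw [hphiy, hφ]; norm_cast
      have hb0 : 0 ≤ b := by
        have := h.eps_nonneg i y; rw [hb] at this; exact_mod_cast this
      have hcondy : ¬(0 < 𝒬.φ i y ∧ 0 < qfreeEps 𝒬 i l) := by
        rintro ⟨-, hcl⟩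
        rw [hc] at hcl
        have : (0:ℤ) < c := by exact_mod_cast hcl
        omega
      constructor
      · rw [qfreeEps, if_neg hcond, ha, hc]
        intro ht
        rcases max_eq_top.mp ht with h' | h'
        · exact WithTop.coe_ne_top h'
        · rw [← WithTop.coe_add] at h'; exact WithTop.coe_ne_top h'
      refine ⟨?_, ?_, ?_⟩
      · rw [qfreeEps, if_neg hcondy, qfreeEps, if_neg hcond, ha, hb, hc, hpairy, ← hpx]
        norm_cast
        omega
      · simp only [freeWt, AddSubgroup.coe_add, hwty]
        abel
      · rw [qfreeF, if_neg hcondy, if_pos (by rw [hc, hφy]; exact_mod_cast (by omega : (c:ℤ) < a + px + 1)), hfy]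
        rfl
    case isFalse hle =>
      -- e acts on the tail
      obtain ⟨t', hE, rfl⟩ : ∃ t', qfreeE 𝒬 i l = some t' ∧ x :: t' = l' := by
        cases hxe : qfreeE 𝒬 i l with
        | none => rw [hxe] at H; simp at H
        | some t' => rw [hxe] at H; exact ⟨t', rfl, by simpa using H⟩
      obtain ⟨hlne, hepst, hwtt, hFt⟩ := qfreeE_facts h hE
      obtain ⟨c, hc⟩ := WithTop.ne_top_iff_exists.mp hlne
      have hc : qfreeEps 𝒬 i l = ((c : ℤ) : WithTop ℤ) := hc.symm
      have hc0 : 0 ≤ c := by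
        have := qfreeEps_nonneg h i l; rw [hc] at this; exact_mod_cast this
      have hφlt : 𝒬.φ i x < qfreeEps 𝒬 i l := not_le.mp hle
      have hφne : 𝒬.φ i x ≠ ⊤ := fun ht => by
        rw [ht, hc] at hφlt; exact (not_top_lt hφlt)
      have hax : 𝒬.ε i x ≠ ⊤ := fun ht => hφne (by rw [h.phi_eq i x, ht]; simp)
      obtain ⟨a, ha⟩ := WithTop.ne_top_iff_exists.mp hax
      have ha : 𝒬.ε i x = ((a : ℤ) : WithTop ℤ) := ha.symm
      set px := S.pair (𝒬.wt x) i with hpx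
      have hφ : 𝒬.φ i x = ((a + px : ℤ) : WithTop ℤ) := by
        rw [h.phi_eq i x, ha]; norm_cast
      have ha0 : 0 ≤ a := by
        have := h.eps_nonneg i x; rw [ha] at this; exact_mod_cast this
      have hap0 : 0 ≤ a + px := by
        have := h.phi_nonneg i x; rw [hφ] at this; exact_mod_cast this
      have hcap : a + px < c := by
        rw [hφ, hc] at hφlt; exact_mod_cast hφlt
      have hap0' : a + px = 0 := by
        by_contra hne
        exact hcond ⟨by rw [hφ]; exact_mod_cast (by omega : (0:ℤ) < a + px),
          by rw [hc]; exact_mod_cast (by omega : (0:ℤ) < c)⟩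
      have htne : qfreeEps 𝒬 i t' ≠ ⊤ := fun ht => by
        rw [ht, hc] at hepst
        simp at hepst
      obtain ⟨b, hbt⟩ := WithTop.ne_top_iff_exists.mp htne
      have hbt : qfreeEps 𝒬 i t' = ((b : ℤ) : WithTop ℤ) := hbt.symm
      have hbc : b + 1 = c := by
        rw [hbt, hc] at hepst; exact_mod_cast hepst
      have hcondt : ¬(0 < 𝒬.φ i x ∧ 0 < qfreeEps 𝒬 i t') := by
        rintro ⟨hφp, -⟩
        rw [hφ] at hφp
        have : (0:ℤ) < a + px := by exact_mod_cast hφp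
        omega
      constructor
      · rw [qfreeEps, if_neg hcond, ha, hc]
        intro ht
        rcases max_eq_top.mp ht with h' | h'
        · exact WithTop.coe_ne_top h'
        · rw [← WithTop.coe_add] at h'; exact WithTop.coe_ne_top h'
      refine ⟨?_, ?_, ?_⟩
      · rw [qfreeEps, if_neg hcondt, qfreeEps, if_neg hcond, ha, hbt, hc, ← hpx]
        norm_cast
        omega
      · simp only [freeWt, AddSubgroup.coe_add, hwtt]
        abel
      · rw [qfreeF, if_neg hcondt,
          if_neg (by rw [hbt, hφ]; intro hlt; have : (b:ℤ) < a + px := by exact_mod_cast hlt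
                     omega),
          hFt]
        rfl
end FactsLemmas

section FactsF

variable {S : QCSetting V ι} {Q : Type*} {𝒬 : QC S Q}

theorem qfreeF_facts (h : 𝒬.IsSeminormal) {i : ι} :
    ∀ {l l' : List Q}, qfreeF 𝒬 i l = some l' →
      qfreeEps 𝒬 i l ≠ ⊤ ∧ qfreeEps 𝒬 i l' = qfreeEps 𝒬 i l + 1 ∧
      (freeWt 𝒬 l : V) = (freeWt 𝒬 l' : V) + S.simple i ∧ qfreeE 𝒬 i l' = some l
  | [], l' => by intro H; simp [qfreeF] at H
  | x :: l, l' => by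
    intro H
    rw [qfreeF] at H
    split at H
    case isTrue => simp at H
    case isFalse hcond =>
    split at H
    case isTrue hlt =>
      obtain ⟨y, hf, rfl⟩ : ∃ y, 𝒬.f i x = some y ∧ y :: l = l' := by
        cases hxf : 𝒬.f i x with
        | none => rw [hxf] at H; simp at H
        | some y => rw [hxf] at H; exact ⟨y, rfl, by simpa using H⟩
      obtain ⟨hax, hay, hepsy, hphiy, hey, hwty, hpairy⟩ := h.f_facts hf
      obtain ⟨a, ha⟩ := WithTop.ne_top_iff_exists.mp hax
      have ha : 𝒬.ε i x = ((a : ℤ) : WithTop ℤ) := ha.symm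
      set px := S.pair (𝒬.wt x) i with hpx
      have hφ : 𝒬.φ i x = ((a + px : ℤ) : WithTop ℤ) := by
        rw [h.phi_eq i x, ha]; norm_cast
      have hby : 𝒬.ε i y = ((a + 1 : ℤ) : WithTop ℤ) := by
        rw [← hepsy, ha]; norm_cast
      have hpy : S.pair (𝒬.wt y) i = px - 2 := by omega
      have hφy : 𝒬.φ i y = ((a + px - 1 : ℤ) : WithTop ℤ) := by
        rw [h.phi_eq i y, hby, hpy]; norm_cast; omega
      have hlne : qfreeEps 𝒬 i l ≠ ⊤ := fun ht => by
        rw [ht, hφ] at hlt; exact not_top_lt hlt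
      obtain ⟨c, hc⟩ := WithTop.ne_top_iff_exists.mp hlne
      have hc : qfreeEps 𝒬 i l = ((c : ℤ) : WithTop ℤ) := hc.symm
      have hc0 : 0 ≤ c := by
        have := qfreeEps_nonneg h i l; rw [hc] at this; exact_mod_cast this
      have hca : c < a + px := by
        rw [hc, hφ] at hlt; exact_mod_cast hlt
      have hcnp : c ≤ 0 := by
        by_contra hcp
        exact hcond ⟨by rw [hφ]; exact_mod_cast (by omega : (0:ℤ) < a + px),
          by rw [hc]; exact_mod_cast (by omega : (0:ℤ) < c)⟩
      have hcondy : ¬(0 < 𝒬.φ i y ∧ 0 < qfreeEps 𝒬 i l) := by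
        rintro ⟨-, hcl⟩
        rw [hc] at hcl
        have : (0:ℤ) < c := by exact_mod_cast hcl
        omega
      constructor
      · rw [qfreeEps, if_neg hcond, ha, hc]
        intro ht
        rcases max_eq_top.mp ht with h' | h'
        · exact WithTop.coe_ne_top h'
        · rw [← WithTop.coe_add] at h'; exact WithTop.coe_ne_top h'
      refine ⟨?_, ?_, ?_⟩
      · rw [qfreeEps, if_neg hcondy, qfreeEps, if_neg hcond, ha, hby, hc, hpy, ← hpx]
        norm_cast
        omega
      · simp only [freeWt, AddSubgroup.coe_add, hwty]
        abel
      · rw [qfreeE, if_neg hcondy,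
          if_pos (by rw [hc, hφy]; exact_mod_cast (by omega : (c:ℤ) ≤ a + px - 1)), hey]
        rfl
    case isFalse hle =>
      obtain ⟨t', hF, rfl⟩ : ∃ t', qfreeF 𝒬 i l = some t' ∧ x :: t' = l' := by
        cases hxf : qfreeF 𝒬 i l with
        | none => rw [hxf] at H; simp at H
        | some t' => rw [hxf] at H; exact ⟨t', rfl, by simpa using H⟩
      obtain ⟨hlne, hepst, hwtt, hEt⟩ := qfreeF_facts h hF
      obtain ⟨c, hc⟩ := WithTop.ne_top_iff_exists.mp hlne
      have hc : qfreeEps 𝒬 i l = ((c : ℤ) : WithTop ℤ) := hc.symm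
      have hc0 : 0 ≤ c := by
        have := qfreeEps_nonneg h i l; rw [hc] at this; exact_mod_cast this
      have hφle : 𝒬.φ i x ≤ qfreeEps 𝒬 i l := not_lt.mp hle
      have hφne : 𝒬.φ i x ≠ ⊤ := fun ht => by
        rw [ht, hc] at hφle; exact WithTop.not_top_le_coe _ hφle
      have hax : 𝒬.ε i x ≠ ⊤ := fun ht => hφne (by rw [h.phi_eq i x, ht]; simp)
      obtain ⟨a, ha⟩ := WithTop.ne_top_iff_exists.mp hax
      have ha : 𝒬.ε i x = ((a : ℤ) : WithTop ℤ) := ha.symm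
      set px := S.pair (𝒬.wt x) i with hpx
      have hφ : 𝒬.φ i x = ((a + px : ℤ) : WithTop ℤ) := by
        rw [h.phi_eq i x, ha]; norm_cast
      have ha0 : 0 ≤ a := by
        have := h.eps_nonneg i x; rw [ha] at this; exact_mod_cast this
      have hap0 : 0 ≤ a + px := by
        have := h.phi_nonneg i x; rw [hφ] at this; exact_mod_cast this
      have hcap : a + px ≤ c := by
        rw [hφ, hc] at hφle; exact_mod_cast hφle
      have hap0' : a + px = 0 := by
        by_contra hne
        exact hcond ⟨by rw [hφ]; exact_mod_cast (by omega : (0:ℤ) < a + px),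
          by rw [hc]; exact_mod_cast (by omega : (0:ℤ) < c)⟩
      have hbt : qfreeEps 𝒬 i t' = ((c + 1 : ℤ) : WithTop ℤ) := by
        rw [hepst, hc]; norm_cast
      have hcondt : ¬(0 < 𝒬.φ i x ∧ 0 < qfreeEps 𝒬 i t') := by
        rintro ⟨hφp, -⟩
        rw [hφ] at hφp
        have : (0:ℤ) < a + px := by exact_mod_cast hφp
        omega
      constructor
      · rw [qfreeEps, if_neg hcond, ha, hc]
        intro ht
        rcases max_eq_top.mp ht with h' | h'
        · exact WithTop.coe_ne_top h'
        · rw [← WithTop.coe_add] at h'; exact WithTop.coe_ne_top h'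
      refine ⟨?_, ?_, ?_⟩
      · rw [qfreeEps, if_neg hcondt, qfreeEps, if_neg hcond, ha, hbt, hc, ← hpx]
        norm_cast
        omega
      · simp only [freeWt, AddSubgroup.coe_add, hwtt]
        abel
      · rw [qfreeE, if_neg hcondt,
          if_neg (by rw [hbt, hφ]; intro hlt'; have : (c:ℤ) + 1 ≤ a + px := by exact_mod_cast hlt'
                     omega),
          hEt]
        rfl

end FactsF

section MoreWord

variable {S : QCSetting V ι} {Q : Type*} {𝒬 : QC S Q}

theorem qfreeE_phi (h : 𝒬.IsSeminormal) {i : ι} {l l' : List Q}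
    (H : qfreeE 𝒬 i l = some l') :
    0 < qfreeEps 𝒬 i l ∧ qfreePhi 𝒬 i l' = qfreePhi 𝒬 i l + 1 := by
  obtain ⟨hne, heps, hwt, -⟩ := qfreeE_facts h H
  obtain ⟨c, hc'⟩ := WithTop.ne_top_iff_exists.mp hne
  have hc : qfreeEps 𝒬 i l = ((c : ℤ) : WithTop ℤ) := hc'.symm
  have h2 : qfreeEps 𝒬 i l' ≠ ⊤ := fun ht => by rw [ht, hc] at heps; simp at heps
  obtain ⟨b, hb'⟩ := WithTop.ne_top_iff_exists.mp h2
  have hb : qfreeEps 𝒬 i l' = ((b : ℤ) : WithTop ℤ) := hb'.symm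
  have hb0 : 0 ≤ b := by
    have := qfreeEps_nonneg h i l'; rw [hb] at this; exact_mod_cast this
  have hbc : b + 1 = c := by rw [hb, hc] at heps; exact_mod_cast heps
  have hp : S.pair (freeWt 𝒬 l') i = S.pair (freeWt 𝒬 l) i + 2 := S.pair_shift i hwt
  constructor
  · rw [hc]; exact_mod_cast (by omega : (0:ℤ) < c)
  · rw [qfreePhi_eq h i l', qfreePhi_eq h i l, hb, hc, hp]
    have : (b:ℤ) + (S.pair (freeWt 𝒬 l) i + 2) = c + S.pair (freeWt 𝒬 l) i + 1 := by omega
    exact_mod_cast this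

theorem qfreeF_phi (h : 𝒬.IsSeminormal) {i : ι} {l l' : List Q}
    (H : qfreeF 𝒬 i l = some l') :
    0 < qfreePhi 𝒬 i l ∧ qfreePhi 𝒬 i l' + 1 = qfreePhi 𝒬 i l := by
  obtain ⟨hne, heps, hwt, -⟩ := qfreeF_facts h H
  obtain ⟨c, hc'⟩ := WithTop.ne_top_iff_exists.mp hne
  have hc : qfreeEps 𝒬 i l = ((c : ℤ) : WithTop ℤ) := hc'.symm
  have hp : S.pair (freeWt 𝒬 l) i = S.pair (freeWt 𝒬 l') i + 2 := S.pair_shift i hwt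
  have hφl : qfreePhi 𝒬 i l = ((c + S.pair (freeWt 𝒬 l') i + 2 : ℤ) : WithTop ℤ) := by
    rw [qfreePhi_eq h i l, hc, hp]
    have : (c:ℤ) + (S.pair (freeWt 𝒬 l') i + 2) = c + S.pair (freeWt 𝒬 l') i + 2 := by ring
    exact_mod_cast this
  have hφl' : qfreePhi 𝒬 i l' = ((c + 1 + S.pair (freeWt 𝒬 l') i : ℤ) : WithTop ℤ) := by
    rw [qfreePhi_eq h i l', heps, hc]
    have : (c:ℤ) + 1 + S.pair (freeWt 𝒬 l') i = c + 1 + S.pair (freeWt 𝒬 l') i := rfl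
    exact_mod_cast this
  have h0 : 0 ≤ c + 1 + S.pair (freeWt 𝒬 l') i := by
    have := qfreePhi_nonneg h i l'; rw [hφl'] at this; exact_mod_cast this
  constructor
  · rw [hφl]; exact_mod_cast (by omega : (0:ℤ) < c + S.pair (freeWt 𝒬 l') i + 2)
  · rw [hφl, hφl']
    have : (c:ℤ) + 1 + S.pair (freeWt 𝒬 l') i + 1 = c + S.pair (freeWt 𝒬 l') i + 2 := by ring
    exact_mod_cast this

theorem qfreeE_isSome (h : 𝒬.IsSeminormal) {i : ι} :
    ∀ {l : List Q}, qfreeEps 𝒬 i l ≠ ⊤ → 0 < qfreeEps 𝒬 i l →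
      ∃ l', qfreeE 𝒬 i l = some l'
  | [], _, hpos => by simp [qfreeEps] at hpos
  | x :: l, hne, hpos => by
    obtain ⟨hcond, hax, hlne⟩ := qfreeEps_cons_ne_top hne
    obtain ⟨a, ha'⟩ := WithTop.ne_top_iff_exists.mp hax
    have ha : 𝒬.ε i x = ((a : ℤ) : WithTop ℤ) := ha'.symm
    obtain ⟨c, hc'⟩ := WithTop.ne_top_iff_exists.mp hlne
    have hc : qfreeEps 𝒬 i l = ((c : ℤ) : WithTop ℤ) := hc'.symm
    set px := S.pair (𝒬.wt x) i with hpx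
    have hφ : 𝒬.φ i x = ((a + px : ℤ) : WithTop ℤ) := by
      rw [h.phi_eq i x, ha]; norm_cast
    have hc0 : 0 ≤ c := by
      have := qfreeEps_nonneg h i l; rw [hc] at this; exact_mod_cast this
    have hap0 : 0 ≤ a + px := by
      have := h.phi_nonneg i x; rw [hφ] at this; exact_mod_cast this
    rw [qfreeE, if_neg hcond]
    by_cases hle : qfreeEps 𝒬 i l ≤ 𝒬.φ i x
    · rw [if_pos hle]
      have hca : c ≤ a + px := by rw [hc, hφ] at hle; exact_mod_cast hle
      have hpos' : 0 < a := by
        rw [qfreeEps, if_neg hcond, ha, hc] at hpos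
        have : (0:ℤ) < max a (c + -px) := by exact_mod_cast hpos
        omega
      obtain ⟨y, hy⟩ := h.e_isSome hax (by rw [ha]; exact_mod_cast hpos')
      exact ⟨y :: l, by rw [hy]; rfl⟩
    · rw [if_neg hle]
      have hca : a + px < c := by
        have := not_le.mp hle; rw [hc, hφ] at this; exact_mod_cast this
      have hcpos : 0 < qfreeEps 𝒬 i l := by
        rw [hc]; exact_mod_cast (by omega : (0:ℤ) < c)
      obtain ⟨t', ht'⟩ := qfreeE_isSome h hlne hcpos
      exact ⟨x :: t', by rw [ht']; rfl⟩

theorem qfreeE_none_of_zero (h : 𝒬.IsSeminormal) {i : ι} :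
    ∀ {l : List Q}, qfreeEps 𝒬 i l = 0 → qfreeE 𝒬 i l = none
  | [], _ => rfl
  | x :: l, hz => by
    have hne : qfreeEps 𝒬 i (x :: l) ≠ ⊤ := by rw [hz]; exact (by simp : (0 : WithTop ℤ) ≠ ⊤)
    obtain ⟨hcond, hax, hlne⟩ := qfreeEps_cons_ne_top hne
    obtain ⟨a, ha'⟩ := WithTop.ne_top_iff_exists.mp hax
    have ha : 𝒬.ε i x = ((a : ℤ) : WithTop ℤ) := ha'.symm
    obtain ⟨c, hc'⟩ := WithTop.ne_top_iff_exists.mp hlne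
    have hc : qfreeEps 𝒬 i l = ((c : ℤ) : WithTop ℤ) := hc'.symm
    set px := S.pair (𝒬.wt x) i with hpx
    have hφ : 𝒬.φ i x = ((a + px : ℤ) : WithTop ℤ) := by
      rw [h.phi_eq i x, ha]; norm_cast
    have ha0 : 0 ≤ a := by
      have := h.eps_nonneg i x; rw [ha] at this; exact_mod_cast this
    have hc0 : 0 ≤ c := by
      have := qfreeEps_nonneg h i l; rw [hc] at this; exact_mod_cast this
    rw [qfreeEps, if_neg hcond, ha, hc] at hz
    have hz' : max a (c + -px) = 0 := by exact_mod_cast hz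
    rw [qfreeE, if_neg hcond, if_pos (by rw [hc, hφ]; exact_mod_cast (by omega : (c:ℤ) ≤ a + px)),
      h.e_none_of_zero (by rw [ha]; exact_mod_cast (by omega : a = 0))]
    rfl

theorem qfreeF_isSome (h : 𝒬.IsSeminormal) {i : ι} :
    ∀ {l : List Q}, qfreeEps 𝒬 i l ≠ ⊤ → 0 < qfreePhi 𝒬 i l →
      ∃ l', qfreeF 𝒬 i l = some l'
  | [], _, hpos => by simp [qfreePhi] at hpos
  | x :: l, hne, hpos => by
    obtain ⟨hcond, hax, hlne⟩ := qfreeEps_cons_ne_top hne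
    obtain ⟨a, ha'⟩ := WithTop.ne_top_iff_exists.mp hax
    have ha : 𝒬.ε i x = ((a : ℤ) : WithTop ℤ) := ha'.symm
    obtain ⟨c, hc'⟩ := WithTop.ne_top_iff_exists.mp hlne
    have hc : qfreeEps 𝒬 i l = ((c : ℤ) : WithTop ℤ) := hc'.symm
    set px := S.pair (𝒬.wt x) i with hpx
    set pl := S.pair (freeWt 𝒬 l) i with hpl
    have hφ : 𝒬.φ i x = ((a + px : ℤ) : WithTop ℤ) := by
      rw [h.phi_eq i x, ha]; norm_cast
    have hφl : qfreePhi 𝒬 i l = ((c + pl : ℤ) : WithTop ℤ) := by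
      rw [qfreePhi_eq h i l, hc]; norm_cast
    have hc0 : 0 ≤ c := by
      have := qfreeEps_nonneg h i l; rw [hc] at this; exact_mod_cast this
    rw [qfreePhi, if_neg hcond, hφ, hφl, ← hpl] at hpos
    have hpos' : 0 < max (a + px + pl) (c + pl) := by exact_mod_cast hpos
    rw [qfreeF, if_neg hcond]
    by_cases hlt : qfreeEps 𝒬 i l < 𝒬.φ i x
    · rw [if_pos hlt]
      have hca : c < a + px := by rw [hc, hφ] at hlt; exact_mod_cast hlt
      have hφpos : 0 < 𝒬.φ i x := by
        rw [hφ]; exact_mod_cast (by omega : (0:ℤ) < a + px)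
      obtain ⟨y, hy⟩ := h.f_isSome hax hφpos
      exact ⟨y :: l, by rw [hy]; rfl⟩
    · rw [if_neg hlt]
      have hca : a + px ≤ c := by
        have := not_lt.mp hlt; rw [hc, hφ] at this; exact_mod_cast this
      have hphipos : 0 < qfreePhi 𝒬 i l := by
        rw [hφl]; exact_mod_cast (by omega : (0:ℤ) < c + pl)
      obtain ⟨t', ht'⟩ := qfreeF_isSome h hlne hphipos
      exact ⟨x :: t', by rw [ht']; rfl⟩

theorem qfreeF_none_of_zero (h : 𝒬.IsSeminormal) {i : ι} :
    ∀ {l : List Q}, qfreeEps 𝒬 i l ≠ ⊤ → qfreePhi 𝒬 i l = 0 → qfreeF 𝒬 i l = none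
  | [], _, _ => rfl
  | x :: l, hne, hz => by
    obtain ⟨hcond, hax, hlne⟩ := qfreeEps_cons_ne_top hne
    obtain ⟨a, ha'⟩ := WithTop.ne_top_iff_exists.mp hax
    have ha : 𝒬.ε i x = ((a : ℤ) : WithTop ℤ) := ha'.symm
    obtain ⟨c, hc'⟩ := WithTop.ne_top_iff_exists.mp hlne
    have hc : qfreeEps 𝒬 i l = ((c : ℤ) : WithTop ℤ) := hc'.symm
    set px := S.pair (𝒬.wt x) i with hpx
    set pl := S.pair (freeWt 𝒬 l) i with hpl
    have hφ : 𝒬.φ i x = ((a + px : ℤ) : WithTop ℤ) := by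
      rw [h.phi_eq i x, ha]; norm_cast
    have hφl : qfreePhi 𝒬 i l = ((c + pl : ℤ) : WithTop ℤ) := by
      rw [qfreePhi_eq h i l, hc]; norm_cast
    have hφl0 : 0 ≤ c + pl := by
      have := qfreePhi_nonneg h i l; rw [hφl] at this; exact_mod_cast this
    rw [qfreePhi, if_neg hcond, hφ, hφl, ← hpl] at hz
    have hz' : max (a + px + pl) (c + pl) = 0 := by exact_mod_cast hz
    have hnotlt : ¬ qfreeEps 𝒬 i l < 𝒬.φ i x := by
      rw [hc, hφ]
      intro hlt
      have : (c:ℤ) < a + px := by exact_mod_cast hlt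
      omega
    rw [qfreeF, if_neg hcond, if_neg hnotlt,
      qfreeF_none_of_zero h hlne (by rw [hφl]; exact_mod_cast (by omega : c + pl = 0))]
    rfl

theorem qfreeE_iter (h : 𝒬.IsSeminormal) (i : ι) :
    ∀ (n : ℕ) (l : List Q), qfreeEps 𝒬 i l = ((n : ℤ) : WithTop ℤ) →
      (optIter (qfreeE 𝒬 i) n l).isSome ∧ optIter (qfreeE 𝒬 i) (n + 1) l = none := by
  intro n
  induction n with
  | zero =>
    intro l hl
    refine ⟨by simp [optIter], ?_⟩
    rw [optIter_one', qfreeE_none_of_zero h (by rw [hl]; norm_cast)]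
  | succ n ih =>
    intro l hl
    have hne : qfreeEps 𝒬 i l ≠ ⊤ := by rw [hl]; exact WithTop.coe_ne_top
    have hpos : 0 < qfreeEps 𝒬 i l := by
      rw [hl]; exact_mod_cast (by omega : (0:ℤ) < ((n + 1 : ℕ) : ℤ))
    obtain ⟨l', hl'⟩ := qfreeE_isSome h hne hpos
    obtain ⟨-, heps, -, -⟩ := qfreeE_facts h hl'
    have htop1 : (⊤ : WithTop ℤ) + 1 = ⊤ := by simp
    have hne' : qfreeEps 𝒬 i l' ≠ ⊤ := fun ht => by
      rw [ht, htop1, hl] at heps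
      exact WithTop.top_ne_coe heps
    obtain ⟨b, hb'⟩ := WithTop.ne_top_iff_exists.mp hne'
    have hb : qfreeEps 𝒬 i l' = ((b : ℤ) : WithTop ℤ) := hb'.symm
    have hbn : b = (n : ℤ) := by
      rw [hb, hl] at heps
      have : (b:ℤ) + 1 = ((n + 1 : ℕ) : ℤ) := by exact_mod_cast heps
      omega
    obtain ⟨hs, hnone⟩ := ih l' (by rw [hb, hbn])
    exact ⟨by rw [optIter_shift _ hl']; exact hs, by rw [optIter_shift _ hl']; exact hnone⟩

theorem qfreeF_iter (h : 𝒬.IsSeminormal) (i : ι) :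
    ∀ (n : ℕ) (l : List Q), qfreeEps 𝒬 i l ≠ ⊤ → qfreePhi 𝒬 i l = ((n : ℤ) : WithTop ℤ) →
      (optIter (qfreeF 𝒬 i) n l).isSome ∧ optIter (qfreeF 𝒬 i) (n + 1) l = none := by
  intro n
  induction n with
  | zero =>
    intro l hne hl
    refine ⟨by simp [optIter], ?_⟩
    rw [optIter_one', qfreeF_none_of_zero h hne (by rw [hl]; norm_cast)]
  | succ n ih =>
    intro l hne hl
    have hpos : 0 < qfreePhi 𝒬 i l := by
      rw [hl]; exact_mod_cast (by omega : (0:ℤ) < ((n + 1 : ℕ) : ℤ))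
    obtain ⟨l', hl'⟩ := qfreeF_isSome h hne hpos
    obtain ⟨-, heps, -, -⟩ := qfreeF_facts h hl'
    obtain ⟨-, hphi⟩ := qfreeF_phi h hl'
    have hne' : qfreeEps 𝒬 i l' ≠ ⊤ := by
      obtain ⟨c, hc'⟩ := WithTop.ne_top_iff_exists.mp hne
      rw [heps, ← hc']
      simp [WithTop.add_eq_top]
    have htop1 : (⊤ : WithTop ℤ) + 1 = ⊤ := by simp
    have hpne : qfreePhi 𝒬 i l' ≠ ⊤ := fun ht => by
      rw [ht, htop1, hl] at hphi
      exact WithTop.top_ne_coe hphi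
    obtain ⟨b, hb'⟩ := WithTop.ne_top_iff_exists.mp hpne
    have hb : qfreePhi 𝒬 i l' = ((b : ℤ) : WithTop ℤ) := hb'.symm
    have hbn : b = (n : ℤ) := by
      rw [hb, hl] at hphi
      have : (b:ℤ) + 1 = ((n + 1 : ℕ) : ℤ) := by exact_mod_cast hphi
      omega
    obtain ⟨hs, hnone⟩ := ih l' hne' (by rw [hb, hbn])
    exact ⟨by rw [optIter_shift _ hl']; exact hs, by rw [optIter_shift _ hl']; exact hnone⟩

end MoreWord

section Concat

variable {S : QCSetting V ι} {Q : Type*} {𝒬 : QC S Q}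

theorem eps_core (A C E : WithTop ℤ) (px pt : ℤ) (hA : 0 ≤ A) (hC : 0 ≤ C) (hE : 0 ≤ E)
    (hB : 0 ≤ A + ((px : ℤ) : WithTop ℤ)) (hD : 0 ≤ C + ((pt : ℤ) : WithTop ℤ)) :
    (if 0 < A + ((px : ℤ) : WithTop ℤ) ∧
        0 < (if 0 < C + ((pt : ℤ) : WithTop ℤ) ∧ 0 < E then (⊤ : WithTop ℤ)
             else max C (E + ((-pt : ℤ) : WithTop ℤ))) then (⊤ : WithTop ℤ)
     else max A ((if 0 < C + ((pt : ℤ) : WithTop ℤ) ∧ 0 < E then (⊤ : WithTop ℤ)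
             else max C (E + ((-pt : ℤ) : WithTop ℤ))) + ((-px : ℤ) : WithTop ℤ)))
    = if 0 < (if 0 < A + ((px : ℤ) : WithTop ℤ) ∧ 0 < C then (⊤ : WithTop ℤ)
              else max (A + ((px : ℤ) : WithTop ℤ) + ((pt : ℤ) : WithTop ℤ))
                (C + ((pt : ℤ) : WithTop ℤ))) ∧ 0 < E then (⊤ : WithTop ℤ)
      else max (if 0 < A + ((px : ℤ) : WithTop ℤ) ∧ 0 < C then (⊤ : WithTop ℤ)
              else max A (C + ((-px : ℤ) : WithTop ℤ)))
          (E + ((-(px + pt) : ℤ) : WithTop ℤ)) := by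
  induction A using WithTop.recTopCoe with
  | top => split_ifs <;> simp_all
  | coe a =>
    induction C using WithTop.recTopCoe with
    | top => split_ifs <;> simp_all
    | coe c =>
      induction E using WithTop.recTopCoe with
      | top => split_ifs <;> simp_all
      | coe e =>
        have hA' : 0 ≤ a := by exact_mod_cast hA
        have hC' : 0 ≤ c := by exact_mod_cast hC
        have hE' : 0 ≤ e := by exact_mod_cast hE
        have hB' : 0 ≤ a + px := by exact_mod_cast hB
        have hD' : 0 ≤ c + pt := by exact_mod_cast hD
        simp only [← WithTop.coe_add, ← WithTop.coe_max, WithTop.coe_pos, WithTop.coe_lt_coe]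
        have htop0 : (0 : WithTop ℤ) < ⊤ := by simp
        split_ifs
        all_goals try rfl
        all_goals try (norm_cast; omega)
        all_goals exfalso
        all_goals simp_all only [WithTop.coe_pos, htop0, and_true, true_and]
        all_goals omega

theorem qfreeEps_append (h : 𝒬.IsSeminormal) (i : ι) :
    ∀ l₁ l₂ : List Q, qfreeEps 𝒬 i (l₁ ++ l₂) =
      if 0 < qfreePhi 𝒬 i l₁ ∧ 0 < qfreeEps 𝒬 i l₂ then ⊤
      else max (qfreeEps 𝒬 i l₁)
        (qfreeEps 𝒬 i l₂ + ((-(S.pair (freeWt 𝒬 l₁) i) : ℤ) : WithTop ℤ))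
  | [], l₂ => by
    have h1 : qfreePhi 𝒬 i ([] : List Q) = 0 := rfl
    have h2 : qfreeEps 𝒬 i ([] : List Q) = 0 := rfl
    have h3 : freeWt 𝒬 ([] : List Q) = 0 := rfl
    rw [List.nil_append, h1, h2, h3, QCSetting.pair_zero, if_neg (by simp), neg_zero]
    have h4 : ((0:ℤ) : WithTop ℤ) = 0 := rfl
    rw [h4, add_zero, max_eq_right (qfreeEps_nonneg h i l₂)]
  | x :: t, l₂ => by
    simp only [List.cons_append, List.append_eq, qfreeEps, qfreePhi, freeWt, QCSetting.pair_add,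
      qfreeEps_append h i t l₂, h.phi_eq i x, qfreePhi_eq h i t]
    exact eps_core (𝒬.ε i x) (qfreeEps 𝒬 i t) (qfreeEps 𝒬 i l₂) _ _ (h.eps_nonneg i x)
      (qfreeEps_nonneg h i t) (qfreeEps_nonneg h i l₂)
      (by rw [← h.phi_eq i x]; exact h.phi_nonneg i x)
      (by rw [← qfreePhi_eq h i t]; exact qfreePhi_nonneg h i t)

theorem qfreePhi_append (h : 𝒬.IsSeminormal) (i : ι) (l₁ l₂ : List Q) :
    qfreePhi 𝒬 i (l₁ ++ l₂) =
      if 0 < qfreePhi 𝒬 i l₁ ∧ 0 < qfreeEps 𝒬 i l₂ then ⊤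
      else max (qfreePhi 𝒬 i l₁ + ((S.pair (freeWt 𝒬 l₂) i : ℤ) : WithTop ℤ))
        (qfreePhi 𝒬 i l₂) := by
  rw [qfreePhi_eq h i (l₁ ++ l₂), qfreeEps_append h i l₁ l₂, freeWt_append,
    QCSetting.pair_add]
  by_cases hc : 0 < qfreePhi 𝒬 i l₁ ∧ 0 < qfreeEps 𝒬 i l₂
  · rw [if_pos hc, if_pos hc]
    simp
  · rw [if_neg hc, if_neg hc, qfreePhi_eq h i l₁, qfreePhi_eq h i l₂]
    exact (max_shift' (qfreeEps 𝒬 i l₁) (qfreeEps 𝒬 i l₂) _ _).symm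

end Concat

section AppendOps

variable {S : QCSetting V ι} {Q : Type*} {𝒬 : QC S Q}

theorem toCoe {a : WithTop ℤ} (hne : a ≠ ⊤) : ∃ z : ℤ, a = ((z : ℤ) : WithTop ℤ) := by
  obtain ⟨z, hz⟩ := WithTop.ne_top_iff_exists.mp hne
  exact ⟨z, hz.symm⟩

theorem qfreePhi_cons_zero (h : 𝒬.IsSeminormal) {i : ι} {x : Q} {t : List Q}
    (H : qfreePhi 𝒬 i (x :: t) = 0) :
    ¬(0 < 𝒬.φ i x ∧ 0 < qfreeEps 𝒬 i t) ∧ 𝒬.φ i x = 0 ∧ qfreePhi 𝒬 i t = 0 := by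
  rw [qfreePhi] at H
  split at H
  case isTrue => exact absurd H (by simp)
  case isFalse hcond1 =>
  have hφt : qfreePhi 𝒬 i t = 0 :=
    le_antisymm (le_trans (le_max_right _ _) H.le) (qfreePhi_nonneg h i t)
  have h1 : 𝒬.φ i x + ((S.pair (freeWt 𝒬 t) i : ℤ) : WithTop ℤ) ≤ 0 :=
    le_trans (le_max_left _ _) H.le
  have hφxne : 𝒬.φ i x ≠ ⊤ := fun ht => by rw [ht] at h1; simp at h1
  obtain ⟨b, hb⟩ := toCoe hφxne
  have hb0 : 0 ≤ b := by
    have := h.phi_nonneg i x; rw [hb] at this; exact_mod_cast this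
  have hbpt : b + S.pair (freeWt 𝒬 t) i ≤ 0 := by
    rw [hb] at h1; exact_mod_cast h1
  have hεtne : qfreeEps 𝒬 i t ≠ ⊤ := fun ht => by
    rw [qfreePhi_eq h i t, ht] at hφt; simp at hφt
  obtain ⟨c, hc⟩ := toCoe hεtne
  have hcpt : c + S.pair (freeWt 𝒬 t) i = 0 := by
    rw [qfreePhi_eq h i t, hc] at hφt; exact_mod_cast hφt
  have hcond1' : ¬((0:ℤ) < b ∧ 0 < c) := fun ⟨u, v⟩ =>
    hcond1 ⟨by rw [hb]; exact_mod_cast u, by rw [hc]; exact_mod_cast v⟩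
  have hbz : b = 0 := by omega
  exact ⟨hcond1, by rw [hb]; exact_mod_cast hbz, hφt⟩

theorem qfreeE_append_left (h : 𝒬.IsSeminormal) {i : ι} :
    ∀ (l₁ l₂ l₁' : List Q), ¬(0 < qfreePhi 𝒬 i l₁ ∧ 0 < qfreeEps 𝒬 i l₂) →
      qfreeEps 𝒬 i l₂ ≤ qfreePhi 𝒬 i l₁ → qfreeE 𝒬 i l₁ = some l₁' →
      qfreeE 𝒬 i (l₁ ++ l₂) = some (l₁' ++ l₂)
  | [], l₂, l₁', _, _, hE => by simp [qfreeE] at hE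
  | x :: t, l₂, l₁', hcond, hle2, hE => by
    rw [qfreeE] at hE
    split at hE
    case isTrue => simp at hE
    case isFalse hcond1 =>
    set px := S.pair (𝒬.wt x) i with hpx
    set pt := S.pair (freeWt 𝒬 t) i with hpt
    split at hE
    case isTrue hle =>
      obtain ⟨y, he, heq⟩ : ∃ y, 𝒬.e i x = some y ∧ y :: t = l₁' := by
        cases hxe : 𝒬.e i x with
        | none => rw [hxe] at hE; simp at hE
        | some y => rw [hxe] at hE; exact ⟨y, rfl, by simpa using hE⟩
      have hax : 𝒬.ε i x ≠ ⊤ := fun ht => by rw [h.e_of_top i x ht] at he; simp at he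
      obtain ⟨a, ha⟩ := toCoe hax
      have hφ : 𝒬.φ i x = ((a + px : ℤ) : WithTop ℤ) := by
        rw [h.phi_eq i x, ha, ← hpx]; norm_cast
      have htne : qfreeEps 𝒬 i t ≠ ⊤ := fun ht => by
        rw [ht, hφ] at hle; exact WithTop.not_top_le_coe _ hle
      obtain ⟨c, hc⟩ := toCoe htne
      have hc0 : 0 ≤ c := by
        have := qfreeEps_nonneg h i t; rw [hc] at this; exact_mod_cast this
      have hca : c ≤ a + px := by rw [hc, hφ] at hle; exact_mod_cast hle
      have hφt : qfreePhi 𝒬 i t = ((c + pt : ℤ) : WithTop ℤ) := by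
        rw [qfreePhi_eq h i t, hc, ← hpt]; norm_cast
      have hct0 : 0 ≤ c + pt := by
        have := qfreePhi_nonneg h i t; rw [hφt] at this; exact_mod_cast this
      have hφcons : qfreePhi 𝒬 i (x :: t) = ((max (a + px + pt) (c + pt) : ℤ) : WithTop ℤ) := by
        rw [qfreePhi, if_neg hcond1, hφ, hφt, ← hpt]
        norm_cast
      have hne2 : qfreeEps 𝒬 i l₂ ≠ ⊤ := fun ht => by
        rw [ht, hφcons] at hle2; exact WithTop.not_top_le_coe _ hle2
      obtain ⟨e0, he0⟩ := toCoe hne2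
      have he00 : 0 ≤ e0 := by
        have := qfreeEps_nonneg h i l₂; rw [he0] at this; exact_mod_cast this
      have he0le : e0 ≤ max (a + px + pt) (c + pt) := by
        rw [he0, hφcons] at hle2; exact_mod_cast hle2
      have hcond' : ¬((0:ℤ) < max (a + px + pt) (c + pt) ∧ 0 < e0) := fun ⟨u, v⟩ =>
        hcond ⟨by rw [hφcons]; exact_mod_cast u, by rw [he0]; exact_mod_cast v⟩
      have hcond1' : ¬((0:ℤ) < a + px ∧ 0 < c) := fun ⟨u, v⟩ =>
        hcond1 ⟨by rw [hφ]; exact_mod_cast u, by rw [hc]; exact_mod_cast v⟩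
      have he0z : e0 = 0 := by omega
      have hepst : qfreeEps 𝒬 i (t ++ l₂) = ((max c (e0 - pt) : ℤ) : WithTop ℤ) := by
        rw [qfreeEps_append h i t l₂,
          if_neg (by rintro ⟨-, h2⟩
                     rw [he0] at h2
                     have : (0:ℤ) < e0 := by exact_mod_cast h2
                     omega),
          hc, he0, ← hpt]
        norm_cast
      rw [List.cons_append, qfreeE,
        if_neg (by rintro ⟨h1, h2⟩
                   rw [hφ] at h1
                   rw [hepst] at h2
                   have h1' : (0:ℤ) < a + px := by exact_mod_cast h1
                   have h2' : (0:ℤ) < max c (e0 - pt) := by exact_mod_cast h2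
                   omega),
        if_pos (by rw [hepst, hφ]; exact_mod_cast (by omega : max c (e0 - pt) ≤ a + px)),
        he, ← heq]
      rfl
    case isFalse hle =>
      obtain ⟨t', hE', heq⟩ : ∃ t', qfreeE 𝒬 i t = some t' ∧ x :: t' = l₁' := by
        cases hxe : qfreeE 𝒬 i t with
        | none => rw [hxe] at hE; simp at hE
        | some t' => rw [hxe] at hE; exact ⟨t', rfl, by simpa using hE⟩
      obtain ⟨htne, hepst', -, -⟩ := qfreeE_facts h hE'
      obtain ⟨c, hc⟩ := toCoe htne
      have hc0 : 0 ≤ c := by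
        have := qfreeEps_nonneg h i t; rw [hc] at this; exact_mod_cast this
      have hφlt : 𝒬.φ i x < qfreeEps 𝒬 i t := not_le.mp hle
      have hφne : 𝒬.φ i x ≠ ⊤ := fun ht => by rw [ht, hc] at hφlt; exact not_top_lt hφlt
      have hax : 𝒬.ε i x ≠ ⊤ := fun ht => hφne (by rw [h.phi_eq i x, ht]; simp)
      obtain ⟨a, haa⟩ := toCoe hax
      have hφ : 𝒬.φ i x = ((a + px : ℤ) : WithTop ℤ) := by
        rw [h.phi_eq i x, haa, ← hpx]; norm_cast
      have hca : a + px < c := by rw [hφ, hc] at hφlt; exact_mod_cast hφlt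
      have hap0 : 0 ≤ a + px := by
        have := h.phi_nonneg i x; rw [hφ] at this; exact_mod_cast this
      have hcond1' : ¬((0:ℤ) < a + px ∧ 0 < c) := fun ⟨u, v⟩ =>
        hcond1 ⟨by rw [hφ]; exact_mod_cast u, by rw [hc]; exact_mod_cast v⟩
      have hap00 : a + px = 0 := by omega
      have hφt : qfreePhi 𝒬 i t = ((c + pt : ℤ) : WithTop ℤ) := by
        rw [qfreePhi_eq h i t, hc, ← hpt]; norm_cast
      have hφcons : qfreePhi 𝒬 i (x :: t) = ((c + pt : ℤ) : WithTop ℤ) := by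
        rw [qfreePhi, if_neg hcond1, hφ, hφt, ← hpt]
        norm_cast
        omega
      have hcond' : ¬(0 < qfreePhi 𝒬 i t ∧ 0 < qfreeEps 𝒬 i l₂) := fun ⟨u, v⟩ =>
        hcond ⟨by rw [hφcons, ← hφt]; exact u, v⟩
      have hle2' : qfreeEps 𝒬 i l₂ ≤ qfreePhi 𝒬 i t := by
        rw [hφt, ← hφcons]; exact hle2
      have hIH := qfreeE_append_left h t l₂ t' hcond' hle2' hE'
      obtain ⟨hne12, heps12, -, -⟩ := qfreeE_facts h hIH
      obtain ⟨m, hm⟩ := toCoe hne12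
      have hresne : qfreeEps 𝒬 i (t' ++ l₂) ≠ ⊤ := fun ht => by
        rw [ht, hm] at heps12; simp at heps12
      obtain ⟨r, hr⟩ := toCoe hresne
      have hr0 : 0 ≤ r := by
        have := qfreeEps_nonneg h i (t' ++ l₂); rw [hr] at this; exact_mod_cast this
      have hrm : r + 1 = m := by rw [hr, hm] at heps12; exact_mod_cast heps12
      rw [List.cons_append, qfreeE,
        if_neg (by rintro ⟨h1, -⟩
                   rw [hφ] at h1
                   have : (0:ℤ) < a + px := by exact_mod_cast h1
                   omega),
        if_neg (by rw [hm, hφ]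
                   intro hle'
                   have : (m:ℤ) ≤ a + px := by exact_mod_cast hle'
                   omega),
        hIH, ← heq]
      rfl

theorem qfreeE_append_right (h : 𝒬.IsSeminormal) {i : ι} :
    ∀ (l₁ l₂ l₂' : List Q), ¬(0 < qfreePhi 𝒬 i l₁ ∧ 0 < qfreeEps 𝒬 i l₂) →
      qfreePhi 𝒬 i l₁ < qfreeEps 𝒬 i l₂ → qfreeE 𝒬 i l₂ = some l₂' →
      qfreeE 𝒬 i (l₁ ++ l₂) = some (l₁ ++ l₂')
  | [], l₂, l₂', _, _, hE => by simpa using hE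
  | x :: t, l₂, l₂', hcond, hlt, hE => by
    obtain ⟨hne2, heps2, -, -⟩ := qfreeE_facts h hE
    have hpos2 : 0 < qfreeEps 𝒬 i l₂ := (qfreeE_phi h hE).1
    have hphi0 : qfreePhi 𝒬 i (x :: t) = 0 := by
      rcases (qfreePhi_nonneg h i (x :: t)).eq_or_lt with heq | hlt'
      · exact heq.symm
      · exact absurd ⟨hlt', hpos2⟩ hcond
    obtain ⟨hcond1, hφx0, hφt0⟩ := qfreePhi_cons_zero h hphi0
    have hcond' : ¬(0 < qfreePhi 𝒬 i t ∧ 0 < qfreeEps 𝒬 i l₂) := fun ⟨u, _⟩ => by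
      rw [hφt0] at u; exact lt_irrefl _ u
    have hlt' : qfreePhi 𝒬 i t < qfreeEps 𝒬 i l₂ := by rw [hφt0]; exact hpos2
    have hIH := qfreeE_append_right h t l₂ l₂' hcond' hlt' hE
    obtain ⟨hne12, heps12, -, -⟩ := qfreeE_facts h hIH
    obtain ⟨m, hm⟩ := toCoe hne12
    have hresne : qfreeEps 𝒬 i (t ++ l₂') ≠ ⊤ := fun ht => by
      rw [ht, hm] at heps12; simp at heps12
    obtain ⟨r, hr⟩ := toCoe hresne
    have hr0 : 0 ≤ r := by
      have := qfreeEps_nonneg h i (t ++ l₂'); rw [hr] at this; exact_mod_cast this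
    have hrm : r + 1 = m := by rw [hr, hm] at heps12; exact_mod_cast heps12
    rw [List.cons_append, qfreeE,
      if_neg (by rintro ⟨h1, -⟩; rw [hφx0] at h1; exact lt_irrefl _ h1),
      if_neg (by rw [hm, hφx0]
                 intro hle'
                 have : (m:ℤ) ≤ 0 := by exact_mod_cast hle'
                 omega),
      hIH]
    rfl

theorem qfreeF_append_left (h : 𝒬.IsSeminormal) {i : ι} :
    ∀ (l₁ l₂ l₁' : List Q), ¬(0 < qfreePhi 𝒬 i l₁ ∧ 0 < qfreeEps 𝒬 i l₂) →
      qfreeEps 𝒬 i l₂ < qfreePhi 𝒬 i l₁ → qfreeF 𝒬 i l₁ = some l₁' →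
      qfreeF 𝒬 i (l₁ ++ l₂) = some (l₁' ++ l₂)
  | [], l₂, l₁', _, _, hF => by simp [qfreeF] at hF
  | x :: t, l₂, l₁', hcond, hlt2, hF => by
    have hφpos : 0 < qfreePhi 𝒬 i (x :: t) :=
      lt_of_le_of_lt (qfreeEps_nonneg h i l₂) hlt2
    have hz : qfreeEps 𝒬 i l₂ = 0 := by
      rcases (qfreeEps_nonneg h i l₂).eq_or_lt with heq | hlt'
      · exact heq.symm
      · exact absurd ⟨hφpos, hlt'⟩ hcond
    rw [qfreeF] at hF
    split at hF
    case isTrue => simp at hF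
    case isFalse hcond1 =>
    set px := S.pair (𝒬.wt x) i with hpx
    set pt := S.pair (freeWt 𝒬 t) i with hpt
    split at hF
    case isTrue hltx =>
      obtain ⟨y, hf, heq⟩ : ∃ y, 𝒬.f i x = some y ∧ y :: t = l₁' := by
        cases hxf : 𝒬.f i x with
        | none => rw [hxf] at hF; simp at hF
        | some y => rw [hxf] at hF; exact ⟨y, rfl, by simpa using hF⟩
      have hax : 𝒬.ε i x ≠ ⊤ := fun ht => by rw [h.f_of_top i x ht] at hf; simp at hf
      obtain ⟨a, ha⟩ := toCoe hax
      have hφ : 𝒬.φ i x = ((a + px : ℤ) : WithTop ℤ) := by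
        rw [h.phi_eq i x, ha, ← hpx]; norm_cast
      have htne : qfreeEps 𝒬 i t ≠ ⊤ := fun ht => by
        rw [ht, hφ] at hltx; exact not_top_lt hltx
      obtain ⟨c, hc⟩ := toCoe htne
      have hc0 : 0 ≤ c := by
        have := qfreeEps_nonneg h i t; rw [hc] at this; exact_mod_cast this
      have hca : c < a + px := by rw [hc, hφ] at hltx; exact_mod_cast hltx
      have hφt : qfreePhi 𝒬 i t = ((c + pt : ℤ) : WithTop ℤ) := by
        rw [qfreePhi_eq h i t, hc, ← hpt]; norm_cast
      have hct0 : 0 ≤ c + pt := by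
        have := qfreePhi_nonneg h i t; rw [hφt] at this; exact_mod_cast this
      have hcond1' : ¬((0:ℤ) < a + px ∧ 0 < c) := fun ⟨u, v⟩ =>
        hcond1 ⟨by rw [hφ]; exact_mod_cast u, by rw [hc]; exact_mod_cast v⟩
      have hepst : qfreeEps 𝒬 i (t ++ l₂) = ((max c (0 - pt) : ℤ) : WithTop ℤ) := by
        rw [qfreeEps_append h i t l₂,
          if_neg (by rintro ⟨-, h2⟩; rw [hz] at h2; exact lt_irrefl _ h2),
          hc, hz, ← hpt]
        norm_cast
      rw [List.cons_append, qfreeF,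
        if_neg (by rintro ⟨h1, h2⟩
                   rw [hφ] at h1
                   rw [hepst] at h2
                   have h1' : (0:ℤ) < a + px := by exact_mod_cast h1
                   have h2' : (0:ℤ) < max c (0 - pt) := by exact_mod_cast h2
                   omega),
        if_pos (by rw [hepst, hφ]; exact_mod_cast (by omega : max c (0 - pt) < a + px)),
        hf, ← heq]
      rfl
    case isFalse hlex =>
      obtain ⟨t', hF', heq⟩ : ∃ t', qfreeF 𝒬 i t = some t' ∧ x :: t' = l₁' := by
        cases hxf : qfreeF 𝒬 i t with
        | none => rw [hxf] at hF; simp at hF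
        | some t' => rw [hxf] at hF; exact ⟨t', rfl, by simpa using hF⟩
      obtain ⟨htne, -, -, -⟩ := qfreeF_facts h hF'
      obtain ⟨hφtpos, -⟩ := qfreeF_phi h hF'
      obtain ⟨c, hc⟩ := toCoe htne
      have hc0 : 0 ≤ c := by
        have := qfreeEps_nonneg h i t; rw [hc] at this; exact_mod_cast this
      have hφle : 𝒬.φ i x ≤ qfreeEps 𝒬 i t := not_lt.mp hlex
      have hφne : 𝒬.φ i x ≠ ⊤ := fun ht => by
        rw [ht, hc] at hφle; exact WithTop.not_top_le_coe _ hφle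
      have hax : 𝒬.ε i x ≠ ⊤ := fun ht => hφne (by rw [h.phi_eq i x, ht]; simp)
      obtain ⟨a, haa⟩ := toCoe hax
      have hφ : 𝒬.φ i x = ((a + px : ℤ) : WithTop ℤ) := by
        rw [h.phi_eq i x, haa, ← hpx]; norm_cast
      have hca : a + px ≤ c := by rw [hφ, hc] at hφle; exact_mod_cast hφle
      have hap0 : 0 ≤ a + px := by
        have := h.phi_nonneg i x; rw [hφ] at this; exact_mod_cast this
      have hcond1' : ¬((0:ℤ) < a + px ∧ 0 < c) := fun ⟨u, v⟩ =>
        hcond1 ⟨by rw [hφ]; exact_mod_cast u, by rw [hc]; exact_mod_cast v⟩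
      have hap00 : a + px = 0 := by omega
      have hcond' : ¬(0 < qfreePhi 𝒬 i t ∧ 0 < qfreeEps 𝒬 i l₂) := fun ⟨_, v⟩ => by
        rw [hz] at v; exact lt_irrefl _ v
      have hlt' : qfreeEps 𝒬 i l₂ < qfreePhi 𝒬 i t := by rw [hz]; exact hφtpos
      have hIH := qfreeF_append_left h t l₂ t' hcond' hlt' hF'
      have hepst : qfreeEps 𝒬 i (t ++ l₂) = ((max c (0 - pt) : ℤ) : WithTop ℤ) := by
        rw [qfreeEps_append h i t l₂,
          if_neg (by rintro ⟨-, h2⟩; rw [hz] at h2; exact lt_irrefl _ h2),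
          hc, hz, ← hpt]
        norm_cast
      rw [List.cons_append, qfreeF,
        if_neg (by rintro ⟨h1, -⟩
                   rw [hφ] at h1
                   have : (0:ℤ) < a + px := by exact_mod_cast h1
                   omega),
        if_neg (by rw [hepst, hφ]
                   intro hlt''
                   have : max c (0 - pt) < a + px := by exact_mod_cast hlt''
                   omega),
        hIH, ← heq]
      rfl

theorem qfreeF_append_right (h : 𝒬.IsSeminormal) {i : ι} :
    ∀ (l₁ l₂ l₂' : List Q), ¬(0 < qfreePhi 𝒬 i l₁ ∧ 0 < qfreeEps 𝒬 i l₂) →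
      qfreePhi 𝒬 i l₁ ≤ qfreeEps 𝒬 i l₂ → qfreeF 𝒬 i l₂ = some l₂' →
      qfreeF 𝒬 i (l₁ ++ l₂) = some (l₁ ++ l₂')
  | [], l₂, l₂', _, _, hF => by simpa using hF
  | x :: t, l₂, l₂', hcond, hle, hF => by
    have hphi0 : qfreePhi 𝒬 i (x :: t) = 0 := by
      rcases (qfreePhi_nonneg h i (x :: t)).eq_or_lt with heq | hlt'
      · exact heq.symm
      · rcases (qfreeEps_nonneg h i l₂).eq_or_lt with heq2 | hlt2
        · exact absurd (hle.trans_eq heq2.symm) (not_le.mpr hlt')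
        · exact absurd ⟨hlt', hlt2⟩ hcond
    obtain ⟨hcond1, hφx0, hφt0⟩ := qfreePhi_cons_zero h hphi0
    have hcond' : ¬(0 < qfreePhi 𝒬 i t ∧ 0 < qfreeEps 𝒬 i l₂) := fun ⟨u, _⟩ => by
      rw [hφt0] at u; exact lt_irrefl _ u
    have hle' : qfreePhi 𝒬 i t ≤ qfreeEps 𝒬 i l₂ := by
      rw [hφt0]; exact qfreeEps_nonneg h i l₂
    have hIH := qfreeF_append_right h t l₂ l₂' hcond' hle' hF
    rw [List.cons_append, qfreeF,
      if_neg (by rintro ⟨h1, -⟩; rw [hφx0] at h1; exact lt_irrefl _ h1),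
      if_neg (not_lt.mpr (by rw [hφx0]; exact qfreeEps_nonneg h i (t ++ l₂))),
      hIH]
    rfl

end AppendOps

/-- The free `⊗̈`-quasi-crystal monoid `F^⊗̈(Q)` over a seminormal
quasi-crystal `Q` is a `⊗̈`-quasi-crystal monoid: its structure maps make `Q*` a
seminormal quasi-crystal, and `u ⊗̈ v ↦ uv` induces a quasi-crystal homomorphism
`F^⊗̈(Q) ⊗̈ F^⊗̈(Q) → F^⊗̈(Q)`. -/
theorem freeQTensor_isQTensorQCMon {V : Type*} [NormedAddCommGroup V]
    [InnerProductSpace ℝ V] {ι : Type*} {S : QCSetting V ι} {Q : Type*}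
    (𝒬 : QC S Q) (h : 𝒬.IsSeminormal) :
    (freeQTensorQC 𝒬).IsSeminormal ∧
    ∃ ψ : QCHom ((freeQTensorQC 𝒬).qtensor (freeQTensorQC 𝒬)) (freeQTensorQC 𝒬),
      ψ.toFun = Option.map (fun p => p.1 * p.2) := by
  have hset : ∀ (i : ι) (w : FreeMonoid Q) (k : ℕ),
      (optIter ((freeQTensorQC 𝒬).e i) k w).isSome
        ↔ (optIter (qfreeE 𝒬 i) k (FreeMonoid.toList w)).isSome := by
    intro i w k
    have heq : optIter ((freeQTensorQC 𝒬).e i) k w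
        = (optIter (qfreeE 𝒬 i) k (FreeMonoid.toList w)).map (fun l => FreeMonoid.ofList l) :=
      optIter_conj (qfreeE 𝒬 i) (fun l => FreeMonoid.ofList l) FreeMonoid.toList
        (fun l => FreeMonoid.toList_ofList l) (fun u => FreeMonoid.ofList_toList u) k w
    rw [heq]
    cases optIter (qfreeE 𝒬 i) k (FreeMonoid.toList w) <;> simp
  have hsetf : ∀ (i : ι) (w : FreeMonoid Q) (k : ℕ),
      (optIter ((freeQTensorQC 𝒬).f i) k w).isSome
        ↔ (optIter (qfreeF 𝒬 i) k (FreeMonoid.toList w)).isSome := by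
    intro i w k
    have heq : optIter ((freeQTensorQC 𝒬).f i) k w
        = (optIter (qfreeF 𝒬 i) k (FreeMonoid.toList w)).map (fun l => FreeMonoid.ofList l) :=
      optIter_conj (qfreeF 𝒬 i) (fun l => FreeMonoid.ofList l) FreeMonoid.toList
        (fun l => FreeMonoid.toList_ofList l) (fun u => FreeMonoid.ofList_toList u) k w
    rw [heq]
    cases optIter (qfreeF 𝒬 i) k (FreeMonoid.toList w) <;> simp
  have hsem : (freeQTensorQC 𝒬).IsSeminormal := by
    constructor
    · intro i w
      exact qfreePhi_eq h i (FreeMonoid.toList w)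
    · -- wt_e
      intro i w y H
      have H' : (qfreeE 𝒬 i (FreeMonoid.toList w)).map (fun l => FreeMonoid.ofList l)
          = some y := H
      obtain ⟨l', hl', rfl⟩ : ∃ l', qfreeE 𝒬 i (FreeMonoid.toList w) = some l'
          ∧ FreeMonoid.ofList l' = y := by
        cases hq : qfreeE 𝒬 i (FreeMonoid.toList w) with
        | none => rw [hq] at H'; simp at H'
        | some l' => rw [hq] at H'; exact ⟨l', rfl, by simpa using H'⟩
      obtain ⟨-, -, hwt, -⟩ := qfreeE_facts h hl'
      show (freeWt 𝒬 (FreeMonoid.toList (FreeMonoid.ofList l')) : V) = _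
      rw [FreeMonoid.toList_ofList]
      exact hwt
    · -- wt_f
      intro i w y H
      have H' : (qfreeF 𝒬 i (FreeMonoid.toList w)).map (fun l => FreeMonoid.ofList l)
          = some y := H
      obtain ⟨l', hl', rfl⟩ : ∃ l', qfreeF 𝒬 i (FreeMonoid.toList w) = some l'
          ∧ FreeMonoid.ofList l' = y := by
        cases hq : qfreeF 𝒬 i (FreeMonoid.toList w) with
        | none => rw [hq] at H'; simp at H'
        | some l' => rw [hq] at H'; exact ⟨l', rfl, by simpa using H'⟩
      obtain ⟨-, -, hwt, -⟩ := qfreeF_facts h hl'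
      show (freeWt 𝒬 (FreeMonoid.toList (FreeMonoid.ofList l')) : V)
        = (freeWt 𝒬 (FreeMonoid.toList w) : V) - S.simple i
      rw [FreeMonoid.toList_ofList, hwt]
      abel
    · -- e_iff_f
      intro i w y
      constructor
      · intro H
        have H' : (qfreeE 𝒬 i (FreeMonoid.toList w)).map (fun l => FreeMonoid.ofList l)
            = some y := H
        obtain ⟨l', hl', rfl⟩ : ∃ l', qfreeE 𝒬 i (FreeMonoid.toList w) = some l'
            ∧ FreeMonoid.ofList l' = y := by
          cases hq : qfreeE 𝒬 i (FreeMonoid.toList w) with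
          | none => rw [hq] at H'; simp at H'
          | some l' => rw [hq] at H'; exact ⟨l', rfl, by simpa using H'⟩
        obtain ⟨-, -, -, hf⟩ := qfreeE_facts h hl'
        show (qfreeF 𝒬 i (FreeMonoid.toList (FreeMonoid.ofList l'))).map
          (fun l => FreeMonoid.ofList l) = some w
        rw [FreeMonoid.toList_ofList, hf]
        simp [FreeMonoid.ofList_toList]
      · intro H
        have H' : (qfreeF 𝒬 i (FreeMonoid.toList y)).map (fun l => FreeMonoid.ofList l)
            = some w := H
        obtain ⟨l', hl', rfl⟩ : ∃ l', qfreeF 𝒬 i (FreeMonoid.toList y) = some l'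
            ∧ FreeMonoid.ofList l' = w := by
          cases hq : qfreeF 𝒬 i (FreeMonoid.toList y) with
          | none => rw [hq] at H'; simp at H'
          | some l' => rw [hq] at H'; exact ⟨l', rfl, by simpa using H'⟩
        obtain ⟨-, -, -, he⟩ := qfreeF_facts h hl'
        show (qfreeE 𝒬 i (FreeMonoid.toList (FreeMonoid.ofList l'))).map
          (fun l => FreeMonoid.ofList l) = some y
        rw [FreeMonoid.toList_ofList, he]
        simp [FreeMonoid.ofList_toList]
    · -- e_of_top
      intro i w ht
      show (qfreeE 𝒬 i (FreeMonoid.toList w)).map (fun l => FreeMonoid.ofList l) = none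
      rw [qfreeE_none_of_top h i _ ht]
      rfl
    · -- f_of_top
      intro i w ht
      show (qfreeF 𝒬 i (FreeMonoid.toList w)).map (fun l => FreeMonoid.ofList l) = none
      rw [qfreeF_none_of_top h i _ ht]
      rfl
    · -- eps_spec
      intro i w hne
      have hne' : qfreeEps 𝒬 i (FreeMonoid.toList w) ≠ ⊤ := hne
      obtain ⟨z, hz⟩ := toCoe hne'
      have hz0 : 0 ≤ z := by
        have := qfreeEps_nonneg h i (FreeMonoid.toList w)
        rw [hz] at this; exact_mod_cast this
      refine ⟨z.toNat, ?_, ?_, ?_⟩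
      · show qfreeEps 𝒬 i (FreeMonoid.toList w) = _
        rw [hz]
        congr 1
        omega
      · show (optIter ((freeQTensorQC 𝒬).e i) z.toNat w).isSome
        rw [hset]
        exact (qfreeE_iter h i z.toNat (FreeMonoid.toList w)
          (by rw [hz]; congr 1; omega)).1
      · intro k hk
        by_contra hgt
        push_neg at hgt
        have hk' : (optIter (qfreeE 𝒬 i) k (FreeMonoid.toList w)).isSome := (hset i w k).mp hk
        have hk2 : (optIter (qfreeE 𝒬 i) (z.toNat + 1) (FreeMonoid.toList w)).isSome :=
          optIter_mono _ hgt hk'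
        have := (qfreeE_iter h i z.toNat (FreeMonoid.toList w)
          (by rw [hz]; congr 1; omega)).2
        rw [this] at hk2
        simp at hk2
    · -- phi_spec
      intro i w hne
      have hne' : qfreeEps 𝒬 i (FreeMonoid.toList w) ≠ ⊤ := hne
      obtain ⟨z, hz⟩ := toCoe hne'
      have hφ : qfreePhi 𝒬 i (FreeMonoid.toList w)
          = ((z + S.pair (freeWt 𝒬 (FreeMonoid.toList w)) i : ℤ) : WithTop ℤ) := by
        rw [qfreePhi_eq h i _, hz]; norm_cast
      have hz0 : 0 ≤ z + S.pair (freeWt 𝒬 (FreeMonoid.toList w)) i := by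
        have := qfreePhi_nonneg h i (FreeMonoid.toList w)
        rw [hφ] at this; exact_mod_cast this
      refine ⟨(z + S.pair (freeWt 𝒬 (FreeMonoid.toList w)) i).toNat, ?_, ?_, ?_⟩
      · show qfreePhi 𝒬 i (FreeMonoid.toList w) = _
        rw [hφ]
        congr 1
        omega
      · show (optIter ((freeQTensorQC 𝒬).f i) _ w).isSome
        rw [hsetf]
        exact (qfreeF_iter h i _ (FreeMonoid.toList w) hne'
          (by rw [hφ]; congr 1; omega)).1
      · intro k hk
        by_contra hgt
        push_neg at hgt
        have hk' : (optIter (qfreeF 𝒬 i) k (FreeMonoid.toList w)).isSome := (hsetf i w k).mp hk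
        have hk2 : (optIter (qfreeF 𝒬 i)
            ((z + S.pair (freeWt 𝒬 (FreeMonoid.toList w)) i).toNat + 1)
            (FreeMonoid.toList w)).isSome :=
          optIter_mono _ hgt hk'
        have := (qfreeF_iter h i ((z + S.pair (freeWt 𝒬 (FreeMonoid.toList w)) i).toNat)
          (FreeMonoid.toList w) hne' (by rw [hφ]; congr 1; omega)).2
        rw [this] at hk2
        simp at hk2
  refine ⟨hsem, ⟨⟨Option.map (fun p => p.1 * p.2), rfl, ?_, ?_, ?_, ?_, ?_⟩, rfl⟩⟩
  · -- wt_eq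
    rintro ⟨u, v⟩ y H
    obtain rfl : u * v = y := by simpa using H
    show freeWt 𝒬 (FreeMonoid.toList (u * v)) = _
    rw [FreeMonoid.toList_mul, freeWt_append]
    rfl
  · -- eps_eq
    rintro i ⟨u, v⟩ y H
    obtain rfl : u * v = y := by simpa using H
    show qfreeEps 𝒬 i (FreeMonoid.toList (u * v)) = _
    rw [FreeMonoid.toList_mul]
    exact qfreeEps_append h i _ _
  · -- phi_eq
    rintro i ⟨u, v⟩ y H
    obtain rfl : u * v = y := by simpa using H
    show qfreePhi 𝒬 i (FreeMonoid.toList (u * v)) = _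
    rw [FreeMonoid.toList_mul]
    exact qfreePhi_append h i _ _
  · -- comm_e
    rintro i ⟨u, v⟩ x' y y' He Hx Hx'
    obtain rfl : u * v = y := by simpa using Hx
    obtain rfl : x'.1 * x'.2 = y' := by simpa using Hx'
    have He' : (if 0 < qfreePhi 𝒬 i (FreeMonoid.toList u) ∧ 0 < qfreeEps 𝒬 i (FreeMonoid.toList v)
        then none
        else if qfreeEps 𝒬 i (FreeMonoid.toList v) ≤ qfreePhi 𝒬 i (FreeMonoid.toList u)
          then ((qfreeE 𝒬 i (FreeMonoid.toList u)).map (fun l => FreeMonoid.ofList l)).map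
            (fun z => (z, v))
          else ((qfreeE 𝒬 i (FreeMonoid.toList v)).map (fun l => FreeMonoid.ofList l)).map
            (fun z => (u, z))) = some x' := He
    split at He'
    case isTrue => simp at He'
    case isFalse hcond =>
    split at He'
    case isTrue hle =>
      obtain ⟨l, hl, hx'⟩ : ∃ l, qfreeE 𝒬 i (FreeMonoid.toList u) = some l
          ∧ (FreeMonoid.ofList l, v) = x' := by
        cases hq : qfreeE 𝒬 i (FreeMonoid.toList u) with
        | none => rw [hq] at He'; simp at He'
        | some l => rw [hq] at He'; exact ⟨l, rfl, by simpa using He'⟩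
      have hres := qfreeE_append_left h (FreeMonoid.toList u) (FreeMonoid.toList v) l hcond hle hl
      show (qfreeE 𝒬 i (FreeMonoid.toList (u * v))).map (fun l => FreeMonoid.ofList l)
        = some (x'.1 * x'.2)
      rw [FreeMonoid.toList_mul, hres, ← hx']
      simp [FreeMonoid.ofList_append, FreeMonoid.ofList_toList]
    case isFalse hle =>
      obtain ⟨l, hl, hx'⟩ : ∃ l, qfreeE 𝒬 i (FreeMonoid.toList v) = some l
          ∧ (u, FreeMonoid.ofList l) = x' := by
        cases hq : qfreeE 𝒬 i (FreeMonoid.toList v) with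
        | none => rw [hq] at He'; simp at He'
        | some l => rw [hq] at He'; exact ⟨l, rfl, by simpa using He'⟩
      have hres := qfreeE_append_right h (FreeMonoid.toList u) (FreeMonoid.toList v) l hcond
        (not_le.mp hle) hl
      show (qfreeE 𝒬 i (FreeMonoid.toList (u * v))).map (fun l => FreeMonoid.ofList l)
        = some (x'.1 * x'.2)
      rw [FreeMonoid.toList_mul, hres, ← hx']
      simp [FreeMonoid.ofList_append, FreeMonoid.ofList_toList]
  · -- comm_f
    rintro i ⟨u, v⟩ x' y y' Hf Hx Hx'
    obtain rfl : u * v = y := by simpa using Hx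
    obtain rfl : x'.1 * x'.2 = y' := by simpa using Hx'
    have Hf' : (if 0 < qfreePhi 𝒬 i (FreeMonoid.toList u) ∧ 0 < qfreeEps 𝒬 i (FreeMonoid.toList v)
        then none
        else if qfreeEps 𝒬 i (FreeMonoid.toList v) < qfreePhi 𝒬 i (FreeMonoid.toList u)
          then ((qfreeF 𝒬 i (FreeMonoid.toList u)).map (fun l => FreeMonoid.ofList l)).map
            (fun z => (z, v))
          else ((qfreeF 𝒬 i (FreeMonoid.toList v)).map (fun l => FreeMonoid.ofList l)).map
            (fun z => (u, z))) = some x' := Hf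
    split at Hf'
    case isTrue => simp at Hf'
    case isFalse hcond =>
    split at Hf'
    case isTrue hlt =>
      obtain ⟨l, hl, hx'⟩ : ∃ l, qfreeF 𝒬 i (FreeMonoid.toList u) = some l
          ∧ (FreeMonoid.ofList l, v) = x' := by
        cases hq : qfreeF 𝒬 i (FreeMonoid.toList u) with
        | none => rw [hq] at Hf'; simp at Hf'
        | some l => rw [hq] at Hf'; exact ⟨l, rfl, by simpa using Hf'⟩
      have hres := qfreeF_append_left h (FreeMonoid.toList u) (FreeMonoid.toList v) l hcond hlt hl
      show (qfreeF 𝒬 i (FreeMonoid.toList (u * v))).map (fun l => FreeMonoid.ofList l)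
        = some (x'.1 * x'.2)
      rw [FreeMonoid.toList_mul, hres, ← hx']
      simp [FreeMonoid.ofList_append, FreeMonoid.ofList_toList]
    case isFalse hlt =>
      obtain ⟨l, hl, hx'⟩ : ∃ l, qfreeF 𝒬 i (FreeMonoid.toList v) = some l
          ∧ (u, FreeMonoid.ofList l) = x' := by
        cases hq : qfreeF 𝒬 i (FreeMonoid.toList v) with
        | none => rw [hq] at Hf'; simp at Hf'
        | some l => rw [hq] at Hf'; exact ⟨l, rfl, by simpa using Hf'⟩
      have hres := qfreeF_append_right h (FreeMonoid.toList u) (FreeMonoid.toList v) l hcond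
        (not_lt.mp hlt) hl
      show (qfreeF 𝒬 i (FreeMonoid.toList (u * v))).map (fun l => FreeMonoid.ofList l)
        = some (x'.1 * x'.2)
      rw [FreeMonoid.toList_mul, hres, ← hx']
      simp [FreeMonoid.ofList_append, FreeMonoid.ofList_toList]
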